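/- arXiv:1306.2931 — 11 statements merged into one kernel-verified Lean document; each statement's English description precedes it below -/
import Mathlib

section
/- A finite simple graph G = (V,E) on n vertices satisfies σ(G) = n if and only if G is a two-factor, that is, every vertex of G has degree exactly two. -/
/-- The palette of a vertex `v` under an edge coloring `c`: the set of colors assigned
to the edges incident to `v`. -/
def palette {V : Type*} {G : SimpleGraph V} {k : ℕ} (c : G.edgeSet → Fin k) (v : V) :
    Set (Fin k) := {i | ∃ e : G.edgeSet, v ∈ (e : Sym2 V) ∧ c e = i}

/-- An edge coloring is `2`-valid if every vertex sees at most two colors. -/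
def TwoValid {V : Type*} {G : SimpleGraph V} {k : ℕ} (c : G.edgeSet → Fin k) : Prop :=
  ∀ v : V, (palette c v).ncard ≤ 2

/-- `σ(G)`: the maximum number of colors of a `2`-valid edge coloring of `G`
(an edge coloring with `k` colors being a surjective map from the edges to `Fin k`). -/
noncomputable def sigma2 {V : Type*} (G : SimpleGraph V) : ℕ :=
  sSup {k : ℕ | ∃ c : G.edgeSet → Fin k, Function.Surjective c ∧ TwoValid c}


section aux
variable {V : Type*} [Fintype V] {G : SimpleGraph V} {k : ℕ}

lemma exists_endpoints (e : G.edgeSet) : ∃ a b, a ≠ b ∧ (e : Sym2 V) = s(a, b) := by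
  obtain ⟨e, he⟩ := e
  revert he
  induction e using Sym2.ind with
  | _ a b => intro he; exact ⟨a, b, ((SimpleGraph.mem_edgeSet G).mp he).ne, rfl⟩

lemma palette_eq_image (c : G.edgeSet → Fin k) (v : V) :
    palette c v = c '' {e : G.edgeSet | v ∈ (e : Sym2 V)} := by
  ext i
  simp [palette, Set.mem_image]

lemma palette_ncard_le_degree [DecidableEq V] [DecidableRel G.Adj]
    (c : G.edgeSet → Fin k) (v : V) :
    (palette c v).ncard ≤ G.degree v := by
  rw [palette_eq_image]
  refine le_trans (Set.ncard_image_le (Set.toFinite _)) (le_of_eq ?_)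
  have h : (Subtype.val '' {e : G.edgeSet | v ∈ (e : Sym2 V)}) = G.incidenceSet v := by
    ext e
    simp only [Set.mem_image, Set.mem_setOf_eq, SimpleGraph.incidenceSet,
      Set.mem_sep_iff]
    constructor
    · rintro ⟨⟨f, hf⟩, hv, rfl⟩; exact ⟨hf, hv⟩
    · rintro ⟨he, hv⟩; exact ⟨⟨e, he⟩, hv, rfl⟩
  calc {e : G.edgeSet | v ∈ (e : Sym2 V)}.ncard
      = (Subtype.val '' {e : G.edgeSet | v ∈ (e : Sym2 V)}).ncard :=
        (Set.ncard_image_of_injective _ Subtype.val_injective).symm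
    _ = (G.incidenceSet v).ncard := by rw [h]
    _ = G.degree v := by
        rw [Set.ncard_eq_toFinset_card', ← SimpleGraph.card_incidenceFinset_eq_degree G v]
        rfl

lemma doublecount (c : G.edgeSet → Fin k) :
    ∑ v : V, (palette c v).ncard = ∑ i : Fin k, {v : V | i ∈ palette c v}.ncard := by
  classical
  have h1 : ∀ v : V, (palette c v).ncard
      = (Finset.univ.filter (fun i => i ∈ palette c v)).card := by
    intro v; rw [← Set.ncard_coe_finset]; congr 1; ext i; simp
  have h2 : ∀ i : Fin k, {v : V | i ∈ palette c v}.ncard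
      = (Finset.univ.filter (fun v => i ∈ palette c v)).card := by
    intro i; rw [← Set.ncard_coe_finset]; congr 1; ext v; simp
  simp only [h1, h2, Finset.card_filter]
  exact Finset.sum_comm

lemma two_le_fiber {c : G.edgeSet → Fin k} (hs : Function.Surjective c) (i : Fin k) :
    2 ≤ {v : V | i ∈ palette c v}.ncard := by
  obtain ⟨e, hce⟩ := hs i
  obtain ⟨a, b, hab, hval⟩ := exists_endpoints e
  have ha : a ∈ {v : V | i ∈ palette c v} := ⟨e, by rw [hval]; simp, hce⟩
  have hb : b ∈ {v : V | i ∈ palette c v} := ⟨e, by rw [hval]; simp, hce⟩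
  rw [show (2:ℕ) = 1 + 1 by rfl]
  exact (Set.one_lt_ncard_iff (Set.toFinite _)).mpr ⟨a, b, ha, hb, hab⟩

lemma le_card_of_valid {c : G.edgeSet → Fin k} (hs : Function.Surjective c)
    (hv : TwoValid c) : k ≤ Fintype.card V := by
  have h := doublecount c
  have h1 : ∑ v : V, (palette c v).ncard ≤ 2 * Fintype.card V := by
    calc ∑ v : V, (palette c v).ncard ≤ ∑ _v : V, 2 :=
          Finset.sum_le_sum fun v _ => hv v
      _ = 2 * Fintype.card V := by simp [Finset.card_univ, mul_comm]
  have h2 : 2 * k ≤ ∑ i : Fin k, {v : V | i ∈ palette c v}.ncard := by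
    calc 2 * k = ∑ _i : Fin k, 2 := by simp [mul_comm]
      _ ≤ _ := Finset.sum_le_sum fun i _ => two_le_fiber hs i
  omega

end aux


/-- A finite simple graph on `n` vertices satisfies `σ(G) = n` if and only if every vertex
of `G` has degree exactly two (i.e. `G` is a two-factor). -/
theorem stmt1 {V : Type*} [Fintype V] (G : SimpleGraph V) :
    sigma2 G = Fintype.card V ↔ ∀ v : V, (G.neighborSet v).ncard = 2 := by
  classical
  set n := Fintype.card V with hn
  unfold sigma2
  constructor
  · intro h v
    have hn1 : 1 ≤ n := Fintype.card_pos_iff.mpr ⟨v⟩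
    have hSne : {k : ℕ | ∃ c : G.edgeSet → Fin k, Function.Surjective c ∧ TwoValid c}.Nonempty := by
      by_contra hc
      rw [Set.not_nonempty_iff_eq_empty] at hc
      rw [hc, csSup_empty] at h
      rw [Nat.bot_eq_zero] at h
      omega
    have hbdd : BddAbove {k : ℕ | ∃ c : G.edgeSet → Fin k, Function.Surjective c ∧ TwoValid c} :=
      ⟨n, fun k hk => by obtain ⟨c, hs, hv⟩ := hk; exact le_card_of_valid hs hv⟩
    have hmem := Nat.sSup_mem hSne hbdd
    rw [h] at hmem
    obtain ⟨c, csurj, cvalid⟩ := hmem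
    have hsum_le : ∑ w : V, (palette c w).ncard ≤ 2 * n := by
      calc ∑ w : V, (palette c w).ncard ≤ ∑ _w : V, 2 := Finset.sum_le_sum fun w _ => cvalid w
        _ = 2 * n := by simp [hn, mul_comm]
    have hdc := doublecount c
    have hsum_ge : 2 * n ≤ ∑ i : Fin n, {w : V | i ∈ palette c w}.ncard := by
      calc 2 * n = ∑ _i : Fin n, 2 := by simp [mul_comm]
        _ ≤ _ := Finset.sum_le_sum fun i _ => two_le_fiber csurj i
    have hsum_eq : ∑ w : V, (palette c w).ncard = 2 * n :=
      le_antisymm hsum_le (hdc ▸ hsum_ge)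
    have hA : ∀ w : V, (palette c w).ncard = 2 := by
      have h2 : ∑ _w : V, 2 = 2 * n := by simp [hn, mul_comm]
      have := (Finset.sum_eq_sum_iff_of_le (s := Finset.univ)
        (f := fun w => (palette c w).ncard)
        (g := fun _ => 2) (fun w _ => cvalid w)).mp (by rw [hsum_eq, h2])
      exact fun w => this w (Finset.mem_univ w)
    have hB : ∀ i : Fin n, {w : V | i ∈ palette c w}.ncard = 2 := by
      have h2 : ∑ _i : Fin n, 2 = 2 * n := by simp [mul_comm]
      have hfow : ∑ i : Fin n, {w : V | i ∈ palette c w}.ncard = 2 * n := by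
        rw [← hdc, hsum_eq]
      have := (Finset.sum_eq_sum_iff_of_le (s := Finset.univ) (f := fun _ : Fin n => 2)
        (g := fun i => {w : V | i ∈ palette c w}.ncard)
        (fun i _ => two_le_fiber csurj i)).mp (by rw [hfow, h2])
      exact fun i => (this i (Finset.mem_univ i)).symm
    have hkey : ∀ (e : G.edgeSet) (x y : V), x ≠ y →
        {w : V | c e ∈ palette c w} = {x, y} → (e : Sym2 V) = s(x, y) := by
      intro e x y hxy hfib
      obtain ⟨a, b, hab, hval⟩ := exists_endpoints e
      have ha : a ∈ {w : V | c e ∈ palette c w} := ⟨e, by rw [hval]; simp, rfl⟩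
      have hb : b ∈ {w : V | c e ∈ palette c w} := ⟨e, by rw [hval]; simp, rfl⟩
      rw [hfib] at ha hb
      simp only [Set.mem_insert_iff, Set.mem_singleton_iff] at ha hb
      rw [hval]
      rcases ha with rfl | rfl <;> rcases hb with rfl | rfl
      · exact absurd rfl hab
      · rfl
      · exact Sym2.eq_swap
      · exact absurd rfl hab
    have hinj : Function.Injective c := by
      intro e f hef
      obtain ⟨x, y, hxy, hfib⟩ := Set.ncard_eq_two.mp (hB (c e))
      have h1 := hkey e x y hxy hfib
      rw [hef] at hfib
      have h2 := hkey f x y hxy hfib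
      exact Subtype.ext (h1.trans h2.symm)
    have hcardE : Fintype.card G.edgeSet = n := by
      rw [← Fintype.card_fin n]
      exact Fintype.card_of_bijective ⟨hinj, csurj⟩
    have hsumdeg : ∑ w : V, G.degree w = 2 * n := by
      rw [SimpleGraph.sum_degrees_eq_twice_card_edges, SimpleGraph.edgeFinset_card, hcardE]
    have hdeg2 : ∀ w : V, G.degree w = 2 := by
      have hge : ∀ w : V, 2 ≤ G.degree w := fun w => (hA w) ▸ palette_ncard_le_degree c w
      have h2 : ∑ _w : V, 2 = 2 * n := by simp [hn, mul_comm]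
      have := (Finset.sum_eq_sum_iff_of_le (s := Finset.univ) (f := fun _ : V => 2)
        (g := fun w => G.degree w) (fun w _ => hge w)).mp (by rw [hsumdeg, h2])
      exact fun w => (this w (Finset.mem_univ w)).symm
    rw [← Nat.card_coe_set_eq, Nat.card_eq_fintype_card,
      SimpleGraph.card_neighborSet_eq_degree]
    exact hdeg2 v
  · intro hdeg
    have hdeg' : ∀ v, G.degree v = 2 := by
      intro v
      rw [← SimpleGraph.card_neighborSet_eq_degree, ← Nat.card_eq_fintype_card,
        Nat.card_coe_set_eq, hdeg v]
    have hcardE : Fintype.card G.edgeSet = n := by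
      have h := SimpleGraph.sum_degrees_eq_twice_card_edges G
      rw [SimpleGraph.edgeFinset_card] at h
      simp only [hdeg', Finset.sum_const, Finset.card_univ, smul_eq_mul] at h
      omega
    have hmem : n ∈ {k : ℕ | ∃ c : G.edgeSet → Fin k, Function.Surjective c ∧ TwoValid c} := by
      refine ⟨⇑(Fintype.equivFinOfCardEq hcardE), (Fintype.equivFinOfCardEq hcardE).surjective, ?_⟩
      intro v
      exact (palette_ncard_le_degree _ v).trans (hdeg' v).le
    have hub : ∀ k ∈ {k : ℕ | ∃ c : G.edgeSet → Fin k, Function.Surjective c ∧ TwoValid c},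
        k ≤ n := fun k hk => by obtain ⟨c, hs, hv⟩ := hk; exact le_card_of_valid hs hv
    exact le_antisymm (csSup_le ⟨n, hmem⟩ hub) (le_csSup ⟨n, hub⟩ hmem)
end

section
/- Let G = (V,E) be a finite simple graph with m edges and let k ≥ 1 be an integer. If m < k, then G has no 2-valid edge coloring with k colors. If G has a matching of size at least k−1 and m ≥ k, then G has a 2-valid edge coloring with exactly k colors. -/
/-- If `G` has `m < k` edges then `G` has no `2`-valid edge coloring with `k` colors;
if `G` has a matching of size at least `k - 1` and `m ≥ k` edges, then `G` has a `2`-valid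
edge coloring with exactly `k` colors. -/
theorem stmt2 {V : Type*} [Fintype V] (G : SimpleGraph V) (k : ℕ) (hk : 1 ≤ k) :
    (G.edgeSet.ncard < k → ¬ ∃ c : G.edgeSet → Fin k, Function.Surjective c ∧ TwoValid c) ∧
    (∀ M : Finset (Sym2 V), (∀ e ∈ M, e ∈ G.edgeSet) →
      (∀ e ∈ M, ∀ f ∈ M, e ≠ f → ∀ x : V, x ∈ e → x ∉ f) →
      k - 1 ≤ M.card → k ≤ G.edgeSet.ncard →
      ∃ c : G.edgeSet → Fin k, Function.Surjective c ∧ TwoValid c) := by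
  classical
  constructor
  · rintro hlt ⟨c, hc, -⟩
    have h1 : Nat.card (Fin k) ≤ Nat.card G.edgeSet :=
      Nat.card_le_card_of_surjective c hc
    rw [Nat.card_eq_fintype_card, Fintype.card_fin, Nat.card_coe_set_eq] at h1
    omega
  · intro M hM hdisj hcard hm
    obtain ⟨S, hSM, hS⟩ := Finset.exists_subset_card_eq hcard
    have hSE : ∀ e ∈ S, e ∈ G.edgeSet := fun e he => hM e (hSM he)
    let f : {x // x ∈ S} ≃ Fin (k - 1) := S.equivFinOfCardEq hS
    have hlt : ∀ i : Fin (k - 1), i.val + 1 < k := fun i => by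
      have := i.2; omega
    let c : G.edgeSet → Fin k := fun e =>
      if h : (e : Sym2 V) ∈ S then ⟨(f ⟨e, h⟩).val + 1, hlt _⟩ else ⟨0, hk⟩
    refine ⟨c, ?_, ?_⟩
    · intro j
      by_cases hj : j.val = 0
      · -- find an edge not in S
        have : ¬ G.edgeSet ⊆ (S : Set (Sym2 V)) := by
          intro hsub
          have := Set.ncard_le_ncard hsub (S : Set (Sym2 V)).toFinite
          rw [Set.ncard_coe_finset] at this
          omega
        obtain ⟨e, heE, heS⟩ := Set.not_subset.mp this
        refine ⟨⟨e, heE⟩, ?_⟩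
        have h0 : c ⟨e, heE⟩ = ⟨0, hk⟩ := dif_neg heS
        rw [h0]
        exact (Fin.ext hj).symm
      · have hjk : j.val - 1 < k - 1 := by have := j.2; omega
        set i : Fin (k - 1) := ⟨j.val - 1, hjk⟩
        set e' := f.symm i with he'
        refine ⟨⟨e'.1, hSE _ e'.2⟩, ?_⟩
        have h1 : c ⟨e'.1, hSE _ e'.2⟩ = ⟨(f ⟨e'.1, e'.2⟩).val + 1, hlt _⟩ :=
          dif_pos e'.2
        rw [h1]
        have h2 : (⟨e'.1, e'.2⟩ : {x // x ∈ S}) = e' := rfl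
        rw [h2, he', f.apply_symm_apply]
        exact Fin.ext (by simp [i]; omega)
    · intro v
      by_cases hv : ∃ e₀ ∈ S, v ∈ e₀
      · obtain ⟨e₀, he₀, hve₀⟩ := hv
        have hsub : palette c v ⊆ {⟨0, hk⟩, ⟨(f ⟨e₀, he₀⟩).val + 1, hlt _⟩} := by
          rintro i ⟨e, hve, rfl⟩
          by_cases hS' : (e : Sym2 V) ∈ S
          · have heq : (e : Sym2 V) = e₀ := by
              by_contra hne
              exact hdisj _ (hSM hS') _ (hSM he₀) hne v hve hve₀
            right
            have hsub : (⟨(e : Sym2 V), hS'⟩ : {x // x ∈ S}) = ⟨e₀, he₀⟩ :=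
              Subtype.ext heq
            show c e = _
            simp only [c, dif_pos hS', hsub]
          · left
            exact dif_neg hS'
        calc (palette c v).ncard ≤ ({⟨0, hk⟩, ⟨(f ⟨e₀, he₀⟩).val + 1, hlt _⟩} :
              Set (Fin k)).ncard := Set.ncard_le_ncard hsub (Set.toFinite _)
          _ ≤ 2 := by
              apply le_trans (Set.ncard_insert_le _ _)
              simp
      · have hsub : palette c v ⊆ {⟨0, hk⟩} := by
          rintro i ⟨e, hve, rfl⟩
          by_cases hS' : (e : Sym2 V) ∈ S
          · exact absurd ⟨e, hS', hve⟩ hv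
          · simp only [c, dif_neg hS']; rfl
        calc (palette c v).ncard ≤ ({⟨0, hk⟩} : Set (Fin k)).ncard :=
              Set.ncard_le_ncard hsub (Set.toFinite _)
          _ ≤ 2 := by simp
end

section
/- Let G be a finite simple graph on n vertices, let c be a 2-valid edge coloring of G using at least n−k colors, and let H be a character subgraph of G with respect to c. If H has s connected components that are paths (all remaining components of H being cycles), then s ≤ k. -/
/-- If `c` is a `2`-valid edge coloring of `G` (on `n` vertices) using at least `n - k`
colors and `H` is a character subgraph of `G` with respect to `c`, then the number of
connected components of `H` that are paths (i.e. contain a vertex of degree one,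
the other components being cycles) is at most `k`. -/
theorem stmt5 {V : Type*} [Fintype V] (G : SimpleGraph V) (k k' : ℕ)
    (hk' : Fintype.card V - k ≤ k')
    (c : G.edgeSet → Fin k') (hsurj : Function.Surjective c) (h2 : TwoValid c)
    (e : Fin k' → G.edgeSet) (he : ∀ i, c (e i) = i)
    (H : SimpleGraph V) (hH : ∀ x y : V, H.Adj x y ↔ ∃ i, (e i : Sym2 V) = s(x, y)) :
    {C : H.ConnectedComponent | ∃ v : V, H.connectedComponentMk v = C ∧
      (H.neighborSet v).ncard = 1}.ncard ≤ k := by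
  classical
  haveI : DecidableRel H.Adj := Classical.decRel _
  -- the number of edges of `H` is `k'`
  have hedgeset : H.edgeSet = Set.range (fun i => (e i : Sym2 V)) := by
    ext s
    induction s using Sym2.ind with
    | _ x y => simp only [SimpleGraph.mem_edgeSet, hH, Set.mem_range]
  have hedges : H.edgeFinset.card = k' := by
    have hinj : Function.Injective (fun i => (e i : Sym2 V)) := by
      intro i j hij
      have : e i = e j := Subtype.ext hij
      rw [← he i, ← he j, this]
    have : H.edgeFinset = Finset.univ.image (fun i => (e i : Sym2 V)) := by
      ext s
      simp [SimpleGraph.mem_edgeFinset, hedgeset, Set.mem_range, eq_comm]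
    rw [this, Finset.card_image_of_injective _ hinj, Finset.card_univ, Fintype.card_fin]
  -- every vertex of `H` has degree at most 2
  have hdeg : ∀ v, H.degree v ≤ 2 := by
    intro v
    rcases Finset.eq_empty_or_nonempty (H.neighborFinset v) with hne | hne
    · rw [SimpleGraph.degree, hne]; simp
    · have hnonempty : Nonempty (Fin k') := by
        obtain ⟨w, hw⟩ := hne
        rw [SimpleGraph.mem_neighborFinset] at hw
        obtain ⟨i, -⟩ := (hH v w).1 hw
        exact ⟨i⟩
      have key : ∀ w ∈ H.neighborFinset v, ∃ i : Fin k', (e i : Sym2 V) = s(v, w) := by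
        intro w hw
        rw [SimpleGraph.mem_neighborFinset] at hw
        exact (hH v w).1 hw
      choose f hf using key
      have hmaps : ∀ w (hw : w ∈ H.neighborFinset v), f w hw ∈ palette c v := by
        intro w hw
        exact ⟨e (f w hw), by rw [hf w hw]; exact Sym2.mem_mk_left v w, he _⟩
      have hfin : (palette c v).Finite := Set.toFinite _
      have hcard : (H.neighborFinset v).card ≤ hfin.toFinset.card := by
        apply Finset.card_le_card_of_injOn
          (fun w => if hw : w ∈ H.neighborFinset v then f w hw else Classical.arbitrary _)
        · intro w hw
          simp only [Finset.mem_coe.mp hw, dif_pos, Finset.mem_coe, Set.Finite.mem_toFinset]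
          exact hmaps w hw
        · intro w hw w' hw' hww'
          simp only [Finset.mem_coe] at hw hw'
          simp only [hw, hw', dif_pos] at hww'
          have : (e (f w hw) : Sym2 V) = (e (f w' hw') : Sym2 V) := by rw [hww']
          rw [hf w hw, hf w' hw'] at this
          exact (Sym2.congr_right.mp this)
      calc H.degree v = (H.neighborFinset v).card := rfl
        _ ≤ hfin.toFinset.card := hcard
        _ = (palette c v).ncard := (Set.ncard_eq_toFinset_card _ hfin).symm
        _ ≤ 2 := h2 v
  -- each path component contains two distinct degree-one vertices
  have hcomp : ∀ (C : H.ConnectedComponent) (v : V), H.connectedComponentMk v = C →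
      H.degree v = 1 →
      ∃ u w : V, u ≠ w ∧ (H.degree u = 1 ∧ H.connectedComponentMk u = C)
        ∧ (H.degree w = 1 ∧ H.connectedComponentMk w = C) := by
    intro C v hv hd
    set HC : SimpleGraph V :=
      { Adj := fun x y => H.Adj x y ∧ H.connectedComponentMk x = C
        symm := by
          constructor
          intro x y ⟨hxy, hx⟩
          exact ⟨hxy.symm,
            (SimpleGraph.ConnectedComponent.connectedComponentMk_eq_of_adj hxy.symm).trans hx⟩
        loopless := ⟨fun x ⟨hxx, _⟩ => H.loopless.irrefl x hxx⟩ } with hHC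
    have hnbr : ∀ u, H.connectedComponentMk u = C →
        HC.neighborFinset u = H.neighborFinset u := by
      intro u hu
      ext w
      simp only [SimpleGraph.mem_neighborFinset, hHC]
      exact ⟨fun h => h.1, fun h => ⟨h, hu⟩⟩
    have hdegC : ∀ u, H.connectedComponentMk u = C → HC.degree u = H.degree u := by
      intro u hu
      rw [SimpleGraph.degree, SimpleGraph.degree, hnbr u hu]
    have hdeg0 : ∀ u, H.connectedComponentMk u ≠ C → HC.degree u = 0 := by
      intro u hu
      rw [SimpleGraph.degree, Finset.card_eq_zero, Finset.eq_empty_iff_forall_notMem]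
      intro w hw
      rw [SimpleGraph.mem_neighborFinset] at hw
      exact hu hw.2
    have heven := HC.even_card_odd_degree_vertices
    have hmem : ∀ u, u ∈ ({u | Odd (HC.degree u)} : Finset V) ↔
        (H.degree u = 1 ∧ H.connectedComponentMk u = C) := by
      intro u
      simp only [Finset.mem_filter, Finset.mem_univ, true_and]
      constructor
      · intro hodd
        by_cases hu : H.connectedComponentMk u = C
        · rw [hdegC u hu] at hodd
          refine ⟨?_, hu⟩
          rcases hodd with ⟨m, hm⟩
          have := hdeg u
          omega
        · rw [hdeg0 u hu] at hodd; simp at hodd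
      · intro ⟨h1, hu⟩
        rw [hdegC u hu, h1]
        exact odd_one
    have hvmem : v ∈ ({u | Odd (HC.degree u)} : Finset V) := (hmem v).2 ⟨hd, hv⟩
    have hcard : 2 ≤ ({u | Odd (HC.degree u)} : Finset V).card := by
      rcases heven with ⟨m, hm⟩
      have : 0 < ({u | Odd (HC.degree u)} : Finset V).card := Finset.card_pos.2 ⟨v, hvmem⟩
      omega
    obtain ⟨u, hu, w, hw, huw⟩ := Finset.one_lt_card.mp hcard
    exact ⟨u, w, huw, (hmem u).1 hu, (hmem w).1 hw⟩
  -- counting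
  haveI : Fintype H.ConnectedComponent := Fintype.ofFinite _
  set S : Set H.ConnectedComponent := {C : H.ConnectedComponent | ∃ v : V,
    H.connectedComponentMk v = C ∧ (H.neighborSet v).ncard = 1} with hS
  have hncard_deg : ∀ v : V, (H.neighborSet v).ncard = H.degree v := by
    intro v
    rw [Set.ncard_eq_toFinset_card']
    rfl
  set Afin : Finset V := Finset.univ.filter (fun v => H.degree v = 1) with hA
  set Bfin : Finset V := Finset.univ.filter (fun v => H.degree v = 2) with hB
  set Sfin : Finset H.ConnectedComponent := S.toFinset with hSfin
  -- 2 * #S ≤ #A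
  have h2S : 2 * Sfin.card ≤ Afin.card := by
    set fiber : H.ConnectedComponent → Finset V :=
      fun C => Afin.filter (fun u => H.connectedComponentMk u = C) with hfiber
    have hdisj : ∀ C ∈ Sfin, ∀ C' ∈ Sfin, C ≠ C' → Disjoint (fiber C) (fiber C') := by
      intro C _ C' _ hCC'
      rw [Finset.disjoint_left]
      intro u hu hu'
      simp only [hfiber, Finset.mem_filter] at hu hu'
      exact hCC' (hu.2 ▸ hu'.2 ▸ rfl)
    have hfib2 : ∀ C ∈ Sfin, 2 ≤ (fiber C).card := by
      intro C hC
      rw [hSfin, Set.mem_toFinset, hS] at hC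
      obtain ⟨v, hv, hd⟩ := hC
      rw [hncard_deg v] at hd
      obtain ⟨u, w, huw, ⟨hu1, huC⟩, ⟨hw1, hwC⟩⟩ := hcomp C v hv hd
      apply Finset.one_lt_card.mpr
      refine ⟨u, ?_, w, ?_, huw⟩ <;>
        simp only [hfiber, hA, Finset.mem_filter, Finset.mem_univ, true_and]
      · exact ⟨hu1, huC⟩
      · exact ⟨hw1, hwC⟩
    calc 2 * Sfin.card = Sfin.card • 2 := by rw [smul_eq_mul, mul_comm]
      _ ≤ ∑ C ∈ Sfin, (fiber C).card := Finset.card_nsmul_le_sum _ _ _ hfib2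
      _ = (Sfin.biUnion fiber).card := (Finset.card_biUnion hdisj).symm
      _ ≤ Afin.card := by
          apply Finset.card_le_card
          intro u hu
          rw [Finset.mem_biUnion] at hu
          obtain ⟨C, -, hu⟩ := hu
          exact (Finset.mem_filter.mp hu).1
  -- degree sum
  have hsum : ∑ v : V, H.degree v = 2 * k' := by
    rw [SimpleGraph.sum_degrees_eq_twice_card_edges, hedges]
  have hAB : ∑ v : V, H.degree v = Afin.card + 2 * Bfin.card := by
    rw [hA, hB, Finset.card_filter, Finset.card_filter, Finset.mul_sum,
      ← Finset.sum_add_distrib]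
    apply Finset.sum_congr rfl
    intro v _
    have := hdeg v
    split_ifs with h1 h2 <;> omega
  have hABn : Afin.card + Bfin.card ≤ Fintype.card V := by
    have hd : Disjoint Afin Bfin := by
      rw [Finset.disjoint_left]
      intro u hu hu'
      rw [hA, Finset.mem_filter] at hu
      rw [hB, Finset.mem_filter] at hu'
      omega
    calc Afin.card + Bfin.card = (Afin ∪ Bfin).card := (Finset.card_union_of_disjoint hd).symm
      _ ≤ Finset.univ.card := Finset.card_le_card (Finset.subset_univ _)
      _ = Fintype.card V := Finset.card_univ
  have hSn : S.ncard = Sfin.card := by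
    rw [hSfin, Set.ncard_eq_toFinset_card']
  rw [hSn]
  omega
end

section
/- Let G be a finite simple graph on n vertices, let c be a 2-valid edge coloring of G using at least n−k colors, and let H be a character subgraph of G with respect to c. Then the number of vertices of G that do not belong to H is at most k; equivalently, |V(H)| ≥ n−k. -/
/-- If `c` is a `2`-valid edge coloring of `G` (on `n` vertices) using at least `n - k`
colors and `H` is a character subgraph of `G` with respect to `c` (with edges `e i`),
then at most `k` vertices of `G` do not belong to `H`; equivalently `|V(H)| ≥ n - k`. -/
theorem stmt6 {V : Type*} [Fintype V] (G : SimpleGraph V) (k k' : ℕ)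
    (hk' : Fintype.card V - k ≤ k')
    (c : G.edgeSet → Fin k') (hsurj : Function.Surjective c) (h2 : TwoValid c)
    (e : Fin k' → G.edgeSet) (he : ∀ i, c (e i) = i) :
    {v : V | ∀ i : Fin k', v ∉ (e i : Sym2 V)}.ncard ≤ k ∧
    Fintype.card V - k ≤ {v : V | ∃ i : Fin k', v ∈ (e i : Sym2 V)}.ncard := by
  classical
  set S : Finset V := Finset.univ.filter (fun v => ∃ i, v ∈ (e i : Sym2 V)) with hS
  -- each chosen edge has exactly 2 endpoints, all lying in S
  have hedge : ∀ i : Fin k', (S.filter (fun v => v ∈ (e i : Sym2 V))).card = 2 := by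
    intro i
    obtain ⟨⟨a, b⟩, hab⟩ := Quot.exists_rep (e i : Sym2 V)
    have hab : s(a, b) = (e i : Sym2 V) := hab
    have hne : a ≠ b := by
      have := (e i).2
      rw [← hab] at this
      exact G.ne_of_adj this
    have : S.filter (fun v => v ∈ (e i : Sym2 V)) = {a, b} := by
      ext v
      simp only [hS, Finset.mem_filter, Finset.mem_univ, true_and, Finset.mem_insert,
        Finset.mem_singleton, ← hab, Sym2.mem_iff]
      constructor
      · rintro ⟨-, h⟩; exact h
      · rintro h; exact ⟨⟨i, by rw [← hab]; exact Sym2.mem_iff.2 h⟩, h⟩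
    rw [this, Finset.card_insert_of_notMem (by simpa using hne), Finset.card_singleton]
  -- each vertex lies in at most 2 chosen edges
  have hvert : ∀ v : V, (Finset.univ.filter (fun i : Fin k' => v ∈ (e i : Sym2 V))).card ≤ 2 := by
    intro v
    have hsub : (↑(Finset.univ.filter (fun i : Fin k' => v ∈ (e i : Sym2 V))) : Set (Fin k'))
        ⊆ palette c v := by
      intro i hi
      simp only [Finset.coe_filter, Set.mem_setOf_eq, Finset.mem_univ, true_and] at hi
      exact ⟨e i, hi, he i⟩
    calc (Finset.univ.filter (fun i : Fin k' => v ∈ (e i : Sym2 V))).card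
        = (↑(Finset.univ.filter (fun i : Fin k' => v ∈ (e i : Sym2 V))) : Set (Fin k')).ncard := by
          rw [Set.ncard_coe_finset]
      _ ≤ (palette c v).ncard := Set.ncard_le_ncard hsub (Set.toFinite _)
      _ ≤ 2 := h2 v
  -- double counting
  have key : k' ≤ S.card := by
    have hcount : 2 * k' ≤ 2 * S.card := by
      calc 2 * k' = ∑ i : Fin k', (S.filter (fun v => v ∈ (e i : Sym2 V))).card := by
            simp [hedge, mul_comm]
        _ = ∑ i : Fin k', ∑ v ∈ S, if v ∈ (e i : Sym2 V) then 1 else 0 := by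
            simp only [Finset.card_filter]
        _ = ∑ v ∈ S, ∑ i : Fin k', if v ∈ (e i : Sym2 V) then 1 else 0 :=
            Finset.sum_comm
        _ = ∑ v ∈ S, (Finset.univ.filter (fun i : Fin k' => v ∈ (e i : Sym2 V))).card := by
            simp only [Finset.card_filter]
        _ ≤ ∑ v ∈ S, 2 := Finset.sum_le_sum (fun v _ => hvert v)
        _ = 2 * S.card := by rw [Finset.sum_const, smul_eq_mul, mul_comm]
    omega
  have hSset : {v : V | ∃ i : Fin k', v ∈ (e i : Sym2 V)} = (↑S : Set V) := by
    ext v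
    simp only [hS, Set.mem_setOf_eq, Finset.coe_filter, Finset.mem_univ, true_and]
  have hSc : {v : V | ∀ i : Fin k', v ∉ (e i : Sym2 V)} = (↑(Sᶜ) : Set V) := by
    ext v
    simp only [hS, Set.mem_setOf_eq, Finset.coe_compl, Set.mem_compl_iff, Finset.mem_coe,
      Finset.mem_filter, Finset.mem_univ, true_and, not_exists]
  have h1 : Fintype.card V - k ≤ {v : V | ∃ i : Fin k', v ∈ (e i : Sym2 V)}.ncard := by
    rw [hSset, Set.ncard_coe_finset]
    exact le_trans hk' key
  refine ⟨?_, h1⟩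
  rw [hSc, Set.ncard_coe_finset, Finset.card_compl]
  have hle : S.card ≤ Fintype.card V := S.card_le_univ
  omega
end

section
/- Let G be a finite simple graph on n vertices, let c be a 2-valid edge coloring of G using at least n−k colors, let H be a character subgraph of G with respect to c, and let T be the set of vertices of H that have degree exactly 2 in H. Then every vertex of G has at most six neighbors in T. -/
lemma subset_pair_of_ncard_le_two {α : Type*} {s : Set α} (hf : s.Finite)
    (h : s.ncard ≤ 2) (hne : s.Nonempty) : ∃ a b, s ⊆ ({a, b} : Set α) := by
  obtain ⟨a, ha⟩ := hne
  have h1 : (s \ {a}).ncard ≤ 1 := by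
    have := Set.ncard_diff_singleton_add_one ha hf
    omega
  rcases (Set.ncard_le_one_iff_eq hf.diff).mp h1 with h0 | ⟨b, hb⟩
  · exact ⟨a, a, fun x hx => by
      rcases eq_or_ne x a with rfl | hxa
      · simp
      · exact absurd (Set.mem_diff_singleton.mpr ⟨hx, hxa⟩) (by simp [h0])⟩
  · refine ⟨a, b, fun x hx => ?_⟩
    rcases eq_or_ne x a with rfl | hxa
    · simp
    · have : x ∈ s \ {a} := ⟨hx, hxa⟩
      rw [hb] at this
      simp [this]

/-- If `c` is a `2`-valid edge coloring of `G` (on `n` vertices) using at least `n - k`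
colors, `H` is a character subgraph of `G` with respect to `c`, and `T` is the set of
vertices of degree exactly `2` in `H`, then every vertex of `G` has at most six
neighbors in `T`. -/
theorem stmt8 {V : Type*} [Fintype V] (G : SimpleGraph V) (k k' : ℕ)
    (hk' : Fintype.card V - k ≤ k')
    (c : G.edgeSet → Fin k') (hsurj : Function.Surjective c) (h2 : TwoValid c)
    (e : Fin k' → G.edgeSet) (he : ∀ i, c (e i) = i)
    (H : SimpleGraph V) (hH : ∀ x y : V, H.Adj x y ↔ ∃ i, (e i : Sym2 V) = s(x, y)) :
    ∀ u : V, (G.neighborSet u ∩ {v : V | (H.neighborSet v).ncard = 2}).ncard ≤ 6 := by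
  intro u
  set S := G.neighborSet u ∩ {v : V | (H.neighborSet v).ncard = 2} with hSdef
  have key : ∀ v ∈ S, ∃ i ∈ palette c u, v ∈ (e i : Sym2 V) := by
    rintro v ⟨hadj, hdeg⟩
    have hadj' : G.Adj u v := hadj
    set ε : G.edgeSet := ⟨s(u, v), hadj'⟩ with hε
    have hiu : c ε ∈ palette c u := ⟨ε, by simp [hε], rfl⟩
    have hiv : c ε ∈ palette c v := ⟨ε, by simp [hε], rfl⟩
    obtain ⟨w1, w2, hw12, hset⟩ := Set.ncard_eq_two.mp hdeg
    have hvw1 : H.Adj v w1 := by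
      have : w1 ∈ H.neighborSet v := by rw [hset]; simp
      exact this
    have hvw2 : H.Adj v w2 := by
      have : w2 ∈ H.neighborSet v := by rw [hset]; simp
      exact this
    obtain ⟨j1, hj1⟩ := (hH v w1).mp hvw1
    obtain ⟨j2, hj2⟩ := (hH v w2).mp hvw2
    have hj12 : j1 ≠ j2 := by
      intro hjj
      apply hw12
      rw [hjj, hj2] at hj1
      exact (Sym2.congr_right.mp hj1.symm)
    have hj1v : j1 ∈ palette c v := ⟨e j1, by rw [hj1]; simp, he j1⟩
    have hj2v : j2 ∈ palette c v := ⟨e j2, by rw [hj2]; simp, he j2⟩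
    have hcase : c ε = j1 ∨ c ε = j2 := by
      by_contra hcon
      push_neg at hcon
      have hsub : ({c ε, j1, j2} : Set (Fin k')) ⊆ palette c v := by
        rintro x (rfl | rfl | rfl) <;> assumption
      have h3 : ({c ε, j1, j2} : Set (Fin k')).ncard = 3 := by
        rw [Set.ncard_insert_of_notMem (by simp [hcon.1, hcon.2]) (Set.toFinite _),
          Set.ncard_insert_of_notMem (by simp [hj12]) (Set.toFinite _),
          Set.ncard_singleton]
      have := Set.ncard_le_ncard hsub (Set.toFinite _)
      have h2v := h2 v
      omega
    rcases hcase with hc1 | hc2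
    · exact ⟨c ε, hiu, by rw [hc1, hj1]; simp⟩
    · exact ⟨c ε, hiu, by rw [hc2, hj2]; simp⟩
  rcases Set.eq_empty_or_nonempty S with hS | hS
  · simp [hS]
  · obtain ⟨v0, hv0⟩ := hS
    obtain ⟨a, b, hab⟩ := subset_pair_of_ncard_le_two (Set.toFinite _) (h2 u)
      ⟨_, (key v0 hv0).choose_spec.1⟩
    obtain ⟨⟨x1, y1⟩, h1⟩ := Quot.exists_rep (e a : Sym2 V)
    obtain ⟨⟨x2, y2⟩, h2'⟩ := Quot.exists_rep (e b : Sym2 V)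
    have hsub : S ⊆ ({x1, y1, x2, y2} : Set V) := by
      intro v hv
      obtain ⟨i, hi, hmem⟩ := key v hv
      rcases hab hi with rfl | rfl
      · rw [← h1] at hmem
        rcases Sym2.mem_iff.mp hmem with rfl | rfl <;> simp
      · rw [← h2'] at hmem
        rcases Sym2.mem_iff.mp hmem with rfl | rfl <;> simp
    calc S.ncard ≤ ({x1, y1, x2, y2} : Set V).ncard :=
          Set.ncard_le_ncard hsub (Set.toFinite _)
      _ ≤ 6 := by
          apply le_trans (Set.ncard_insert_le _ _)
          have := Set.ncard_insert_le y1 ({x2, y2} : Set V)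
          have := Set.ncard_insert_le x2 ({y2} : Set V)
          simp [Set.ncard_singleton] at *
          omega
end

section
/- Let G be a finite simple graph on n vertices that admits a 2-valid edge coloring using at least n−k colors. Then the maximum degree of G is at most 3k+6. -/
/-- If a graph `G` on `n` vertices admits a `2`-valid edge coloring using at least `n - k`
colors, then the maximum degree of `G` is at most `3k + 6`. -/
theorem stmt9 {V : Type*} [Fintype V] (G : SimpleGraph V) (k k' : ℕ)
    (hk' : Fintype.card V - k ≤ k')
    (c : G.edgeSet → Fin k') (hsurj : Function.Surjective c) (h2 : TwoValid c) :
    ∀ v : V, (G.neighborSet v).ncard ≤ 3 * k + 6 := by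
  classical
  intro v
  choose f hf using hsurj
  set n := Fintype.card V with hn
  -- the palette of each vertex as a Finset
  set pal : V → Finset (Fin k') :=
    fun u => Finset.univ.filter (fun i => i ∈ palette c u) with hpal_def
  have hpal_mem : ∀ u i, i ∈ pal u ↔ i ∈ palette c u := by
    intro u i; simp [hpal_def]
  have hpal_card : ∀ u : V, (pal u).card ≤ 2 := by
    intro u
    have h := h2 u
    have heq : (palette c u).ncard = (pal u).card := by
      rw [Set.ncard_eq_toFinset_card']
      congr 1
      ext i; simp [hpal_def]
    omega
  -- each edge has exactly two endpoints
  have hend : ∀ e : G.edgeSet,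
      (Finset.univ.filter (fun u => u ∈ (e : Sym2 V))).card = 2 := by
    rintro ⟨q, hq⟩
    induction q using Sym2.ind with
    | _ a b =>
      rw [SimpleGraph.mem_edgeSet] at hq
      have hab := hq.ne
      have hset : (Finset.univ.filter (fun u => u ∈ s(a, b))) = {a, b} := by
        ext u; simp [Sym2.mem_iff]
      rw [hset, Finset.card_insert_of_notMem (by simp [hab]), Finset.card_singleton]
  -- colors not in the palette of v
  set T : Finset (Fin k') := Finset.univ.filter (fun i => i ∉ palette c v) with hT
  have hTP : (pal v).card + T.card = k' := by
    have := Finset.card_filter_add_card_filter_not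
      (s := (Finset.univ : Finset (Fin k'))) (p := fun i => i ∈ palette c v)
    simpa [hpal_def, hT, Finset.card_univ] using this
  -- double counting
  set wt : V → ℕ := fun u => if u = v then 0 else if G.Adj v u then 1 else 2 with hwt
  have hdc : 2 * T.card = ∑ u : V, (T.filter (fun i => u ∈ (f i : Sym2 V))).card := by
    have h1 : ∑ i ∈ T, (Finset.univ.filter (fun u => u ∈ (f i : Sym2 V))).card
        = 2 * T.card := by
      rw [Finset.sum_congr rfl (fun i _ => hend (f i))]
      simp [mul_comm]
    rw [← h1]
    simp_rw [Finset.card_filter]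
    exact Finset.sum_comm
  -- if u sees color i via the chosen edge f i, then i is in u's palette
  have hseen : ∀ u i, u ∈ (f i : Sym2 V) → i ∈ palette c u := by
    intro u i hu
    exact ⟨f i, hu, hf i⟩
  have hbound : ∀ u : V, (T.filter (fun i => u ∈ (f i : Sym2 V))).card ≤ wt u := by
    intro u
    by_cases huv : u = v
    · subst huv
      have : T.filter (fun i => u ∈ (f i : Sym2 V)) = ∅ := by
        ext i
        simp only [Finset.mem_filter, hT, Finset.mem_univ, true_and, Finset.notMem_empty,
          iff_false, not_and]
        intro hi hu
        exact hi (hseen u i hu)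
      simp [this, hwt]
    · by_cases hadj : G.Adj v u
      · -- u is a neighbour of v : at most one color outside v's palette
        have hwtu : wt u = 1 := by simp [hwt, huv, hadj]
        rw [hwtu]
        set e : G.edgeSet := ⟨s(v, u), by rwa [SimpleGraph.mem_edgeSet]⟩ with he
        set j : Fin k' := c e with hj
        have hju : j ∈ pal u := by
          rw [hpal_mem]
          exact ⟨e, by simp [he, Sym2.mem_iff], rfl⟩
        have hjv : j ∈ palette c v := ⟨e, by simp [he, Sym2.mem_iff], rfl⟩
        have hsub : T.filter (fun i => u ∈ (f i : Sym2 V)) ⊆ (pal u).erase j := by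
          intro i hi
          simp only [Finset.mem_filter, hT, Finset.mem_univ, true_and] at hi
          obtain ⟨hiT, hiu⟩ := hi
          refine Finset.mem_erase.mpr ⟨?_, (hpal_mem u i).mpr (hseen u i hiu)⟩
          intro hij
          exact hiT (hij ▸ hjv)
        calc (T.filter (fun i => u ∈ (f i : Sym2 V))).card
            ≤ ((pal u).erase j).card := Finset.card_le_card hsub
          _ = (pal u).card - 1 := Finset.card_erase_of_mem hju
          _ ≤ 1 := by have := hpal_card u; omega
      · have hwtu : wt u = 2 := by simp [hwt, huv, hadj]
        rw [hwtu]
        have hsub : T.filter (fun i => u ∈ (f i : Sym2 V)) ⊆ pal u := by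
          intro i hi
          simp only [Finset.mem_filter, hT, Finset.mem_univ, true_and] at hi
          exact (hpal_mem u i).mpr (hseen u i hi.2)
        exact le_trans (Finset.card_le_card hsub) (hpal_card u)
  have hkey : 2 * T.card ≤ ∑ u : V, wt u := by
    rw [hdc]
    exact Finset.sum_le_sum (fun u _ => hbound u)
  -- compute the sum of the weights
  set d : ℕ := (G.neighborFinset v).card with hd
  have hsum : ∑ u : V, wt u + (2 + d) = 2 * n := by
    have hpt : ∀ u : V,
        wt u + ((if u = v then 2 else 0) + (if G.Adj v u then 1 else 0)) = 2 := by
      intro u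
      by_cases huv : u = v
      · subst huv; simp [hwt, G.irrefl]
      · by_cases hadj : G.Adj v u <;> simp [hwt, huv, hadj]
    have e1 : ∑ u : V, ((if u = v then 2 else 0) : ℕ) = 2 := by simp
    have e2 : ∑ u : V, ((if G.Adj v u then 1 else 0) : ℕ) = d := by
      rw [hd, SimpleGraph.neighborFinset_eq_filter, Finset.card_filter]
    have e3 : ∑ u : V, (wt u + ((if u = v then 2 else 0) + (if G.Adj v u then 1 else 0)))
        = 2 * n := by
      rw [Finset.sum_congr rfl (fun u _ => hpt u)]
      simp [hn, mul_comm]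
    rw [Finset.sum_add_distrib, Finset.sum_add_distrib, e1, e2] at e3
    omega
  have hdn : d ≤ n := by
    rw [hd, hn]
    exact Finset.card_le_univ _
  have hgoal : (G.neighborSet v).ncard = d := by
    rw [hd, SimpleGraph.neighborFinset_def, Set.ncard_eq_toFinset_card']
  rw [hgoal]
  have hp2 := hpal_card v
  omega
end

section
/- Let G = (V,E) be a finite simple graph on n vertices, let u and v be adjacent vertices of G with deg(u) = deg(v) = 2, let v' be the neighbor of v other than u, and assume v' ≠ u and v' is not adjacent to u. Let H be the graph on vertex set V∖{v} whose edge set is (E with the edges uv and vv' removed) together with the new edge uv'. Then G has a 2-valid edge coloring using at least n−k colors if and only if H has a 2-valid edge coloring using at least (n−1)−k colors. -/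
lemma compress {V : Type*} {G : SimpleGraph V} {k : ℕ} (c : G.edgeSet → Fin k)
    (hc : TwoValid c) :
    ∃ c' : G.edgeSet → Fin ((Set.range c).ncard),
      Function.Surjective c' ∧ TwoValid c' := by
  classical
  set S := Set.range c with hS
  haveI : Fintype S := S.toFinite.fintype
  have hcard : Fintype.card S = S.ncard := by
    rw [Set.ncard_eq_toFinset_card']
    simp
  let E : S ≃ Fin S.ncard := Fintype.equivFinOfCardEq hcard
  refine ⟨fun e => E ⟨c e, ⟨e, rfl⟩⟩, ?_, ?_⟩
  · intro i
    obtain ⟨x, hx⟩ := (E.symm i).2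
    exact ⟨x, by simpa [hx] using congrArg E (Subtype.ext hx ▸ rfl : (⟨c x, ⟨x, rfl⟩⟩ : S) = E.symm i) |>.trans (E.apply_symm_apply i)⟩
  · intro w
    have hsub : palette (fun e => E ⟨c e, ⟨e, rfl⟩⟩) w ⊆
        (fun s : S => E s) '' {s : S | (s : Fin k) ∈ palette c w} := by
      rintro i ⟨e, he, rfl⟩
      exact ⟨⟨c e, ⟨e, rfl⟩⟩, ⟨e, he, rfl⟩, rfl⟩
    calc (palette (fun e => E ⟨c e, ⟨e, rfl⟩⟩) w).ncard
        ≤ ((fun s : S => E s) '' {s : S | (s : Fin k) ∈ palette c w}).ncard :=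
          Set.ncard_le_ncard hsub (Set.toFinite _)
      _ = {s : S | (s : Fin k) ∈ palette c w}.ncard :=
          Set.ncard_image_of_injective _ E.injective
      _ = (Subtype.val '' {s : S | (s : Fin k) ∈ palette c w}).ncard :=
          (Set.ncard_image_of_injective _ Subtype.val_injective).symm
      _ ≤ (palette c w).ncard := Set.ncard_le_ncard (by rintro x ⟨s, hs, rfl⟩; exact hs) (Set.toFinite _)
      _ ≤ 2 := hc w

/-- Correctness of the reduction rule for adjacent degree-two vertices: with `u, v` adjacent
vertices of degree two, `v'` the neighbor of `v` other than `u` (with `v'` not adjacent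
to `u`), and `H` the graph on `V \ {v}` obtained by deleting `v` (and the edges `uv`, `vv'`)
and adding the edge `uv'`, the graph `G` has a `2`-valid edge coloring using at least
`n - k` colors iff `H` has a `2`-valid edge coloring using at least `(n - 1) - k` colors. -/
theorem stmt10 {V : Type*} [Fintype V] [DecidableEq V] (G : SimpleGraph V) (k : ℕ)
    (u v v' : V) (huv : G.Adj u v) (hvv' : G.Adj v v')
    (hdu : (G.neighborSet u).ncard = 2) (hdv : (G.neighborSet v).ncard = 2)
    (hne : v' ≠ u) (hnadj : ¬ G.Adj u v')
    (H : SimpleGraph {x : V // x ≠ v})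
    (hH : ∀ x y : {x : V // x ≠ v}, H.Adj x y ↔
      (G.Adj x y ∨ ((x : V) = u ∧ (y : V) = v') ∨ ((x : V) = v' ∧ (y : V) = u))) :
    (∃ k' : ℕ, Fintype.card V - k ≤ k' ∧
      ∃ c : G.edgeSet → Fin k', Function.Surjective c ∧ TwoValid c) ↔
    (∃ k' : ℕ, Fintype.card V - 1 - k ≤ k' ∧
      ∃ c : H.edgeSet → Fin k', Function.Surjective c ∧ TwoValid c) := by
  classical
  have hu : u ≠ v := huv.ne
  have hv'v : v' ≠ v := hvv'.ne'
  have huv'ne : u ≠ v' := hne.symm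
  -- neighbor set of v
  have Nv : G.neighborSet v = {u, v'} := by
    have hsub : ({u, v'} : Set V) ⊆ G.neighborSet v := by
      rintro x (rfl | rfl)
      · exact huv.symm
      · exact hvv'
    refine (Set.eq_of_subset_of_ncard_le hsub ?_ (Set.toFinite _)).symm
    rw [hdv, Set.ncard_pair huv'ne]
  -- the other neighbor of u
  obtain ⟨u', hu'v, hNu⟩ : ∃ u', u' ≠ v ∧ G.neighborSet u = {v, u'} := by
    obtain ⟨a, b, hab, hNu⟩ := Set.ncard_eq_two.mp hdu
    have hv_mem : v ∈ G.neighborSet u := huv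
    rw [hNu] at hv_mem
    rcases hv_mem with rfl | rfl
    · exact ⟨b, hab.symm, hNu⟩
    · exact ⟨a, hab, by rw [hNu, Set.pair_comm]⟩
  have hadjuu' : G.Adj u u' := by
    have : u' ∈ G.neighborSet u := by rw [hNu]; exact Or.inr rfl
    exact this
  -- subtype points
  set U : {x : V // x ≠ v} := ⟨u, hu⟩ with hU
  set V2 : {x : V // x ≠ v} := ⟨v', hv'v⟩ with hV2
  have fuv'mem : s(U, V2) ∈ H.edgeSet := (hH U V2).mpr (Or.inr (Or.inl ⟨rfl, rfl⟩))
  set fuv' : H.edgeSet := ⟨s(U, V2), fuv'mem⟩ with hfuv'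
  -- L1 : edges of G at v
  have L1 : ∀ e : Sym2 V, e ∈ G.edgeSet → v ∈ e → e = s(u, v) ∨ e = s(v, v') := by
    intro e
    induction e using Sym2.ind with
    | _ x y =>
      intro he hv
      rw [SimpleGraph.mem_edgeSet] at he
      rcases Sym2.mem_iff.mp hv with h | h
      · subst h
        have hy : y ∈ G.neighborSet v := he
        rw [Nv] at hy
        rcases hy with rfl | rfl
        · exact Or.inl (Sym2.eq_swap)
        · exact Or.inr rfl
      · subst h
        have hx : x ∈ G.neighborSet v := he.symm
        rw [Nv] at hx
        rcases hx with rfl | rfl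
        · exact Or.inl rfl
        · exact Or.inr (Sym2.eq_swap)
  -- L4 : edges of G at u avoiding v
  have L4 : ∀ e : Sym2 V, e ∈ G.edgeSet → u ∈ e → v ∉ e → e = s(u, u') := by
    intro e
    induction e using Sym2.ind with
    | _ x y =>
      intro he hum hv
      rw [SimpleGraph.mem_edgeSet] at he
      rcases Sym2.mem_iff.mp hum with h | h
      · subst h
        have hy : y ∈ G.neighborSet u := he
        rw [hNu] at hy
        rcases hy with rfl | rfl
        · exact absurd (Sym2.mem_iff.mpr (Or.inr rfl)) hv
        · rfl
      · subst h
        have hx : x ∈ G.neighborSet u := he.symm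
        rw [hNu] at hx
        rcases hx with rfl | rfl
        · exact absurd (Sym2.mem_iff.mpr (Or.inl rfl)) hv
        · exact Sym2.eq_swap
  -- Lnv : v is not in a lifted edge
  have Lnv : ∀ f : Sym2 {x : V // x ≠ v}, v ∉ Sym2.map Subtype.val f := by
    intro f h
    obtain ⟨a, _, ha⟩ := Sym2.mem_map.mp h
    exact a.2 ha
  -- L2 : edges of H
  have L2 : ∀ f : H.edgeSet, Sym2.map Subtype.val (f : Sym2 {x : V // x ≠ v}) ∈ G.edgeSet
      ∨ f = fuv' := by
    rintro ⟨f, hf⟩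
    revert hf
    induction f using Sym2.ind with
    | _ x y =>
      intro hf
      rcases (hH x y).mp hf with h | ⟨hx, hy⟩ | ⟨hx, hy⟩
      · left
        rw [Sym2.map_pair_eq]
        exact h
      · right
        apply Subtype.ext
        show s(x, y) = s(U, V2)
        have hx' : x = U := Subtype.ext (show (x : V) = (U : V) by rw [hU]; exact hx)
        have hy' : y = V2 := Subtype.ext (show (y : V) = (V2 : V) by rw [hV2]; exact hy)
        rw [hx', hy']
      · right
        apply Subtype.ext
        show s(x, y) = s(U, V2)
        have hx' : x = V2 := Subtype.ext (show (x : V) = (V2 : V) by rw [hV2]; exact hx)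
        have hy' : y = U := Subtype.ext (show (y : V) = (U : V) by rw [hU]; exact hy)
        rw [hx', hy']
        exact Sym2.eq_swap
  -- L3 : lifting edges of G avoiding v
  have L3 : ∀ e : Sym2 V, e ∈ G.edgeSet → v ∉ e →
      ∃ f : H.edgeSet, Sym2.map Subtype.val (f : Sym2 {x : V // x ≠ v}) = e := by
    intro e
    induction e using Sym2.ind with
    | _ x y =>
      intro he hv
      rw [SimpleGraph.mem_edgeSet] at he
      have hx : x ≠ v := fun h => hv (h ▸ Sym2.mem_iff.mpr (Or.inl rfl))
      have hy : y ≠ v := fun h => hv (h ▸ Sym2.mem_iff.mpr (Or.inr rfl))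
      exact ⟨⟨s(⟨x, hx⟩, ⟨y, hy⟩), (hH _ _).mpr (Or.inl he)⟩, Sym2.map_pair_eq _ _ _⟩
  -- Lmem : membership transfer
  have Lmem : ∀ (f : Sym2 {x : V // x ≠ v}) (w : {x : V // x ≠ v}),
      w ∈ f ↔ (w : V) ∈ Sym2.map Subtype.val f := by
    intro f w
    constructor
    · intro h
      exact Sym2.mem_map.mpr ⟨w, h, rfl⟩
    · intro h
      obtain ⟨a, ha, hav⟩ := Sym2.mem_map.mp h
      exact Subtype.ext hav.symm ▸ ha
  constructor
  · -- forward
    rintro ⟨k', hk', c, hcs, hcv⟩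
    set euv : G.edgeSet := ⟨s(u, v), huv⟩ with heuv
    set evv' : G.edgeSet := ⟨s(v, v'), hvv'⟩ with hevv'
    set c' : H.edgeSet → Fin k' := fun f =>
      if h : Sym2.map Subtype.val (f : Sym2 {x : V // x ≠ v}) ∈ G.edgeSet then c ⟨_, h⟩
      else c evv' with hc'
    have hvalid' : TwoValid c' := by
      intro w
      by_cases hw : (w : V) = u
      · have hadjE : s(u, u') ∈ G.edgeSet := hadjuu'
        have hsub : palette c' w ⊆ {c ⟨s(u, u'), hadjE⟩, c evv'} := by
          rintro i ⟨f, hwf, rfl⟩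
          by_cases h : Sym2.map Subtype.val (f : Sym2 {x : V // x ≠ v}) ∈ G.edgeSet
          · left
            have humem : u ∈ Sym2.map Subtype.val (f : Sym2 {x : V // x ≠ v}) :=
              hw ▸ (Lmem _ w).mp hwf
            have heq : Sym2.map Subtype.val (f : Sym2 {x : V // x ≠ v}) = s(u, u') :=
              L4 _ h humem (Lnv _)
            have : (⟨_, h⟩ : G.edgeSet) = ⟨s(u, u'), hadjE⟩ := Subtype.ext heq
            simp only [hc', dif_pos h, this]
          · right
            simp only [hc', dif_neg h]
            rfl
        calc (palette c' w).ncard ≤ ({c ⟨s(u, u'), hadjE⟩, c evv'} : Set (Fin k')).ncard :=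
              Set.ncard_le_ncard hsub (Set.toFinite _)
          _ ≤ 2 := (Set.ncard_insert_le _ _).trans (by simp)
      · have hsub : palette c' w ⊆ palette c (w : V) := by
          rintro i ⟨f, hwf, rfl⟩
          by_cases h : Sym2.map Subtype.val (f : Sym2 {x : V // x ≠ v}) ∈ G.edgeSet
          · exact ⟨⟨_, h⟩, (Lmem _ w).mp hwf, by simp only [hc', dif_pos h]⟩
          · have hf : f = fuv' := (L2 f).resolve_left h
            have hwv' : (w : V) = v' := by
              subst hf
              rcases Sym2.mem_iff.mp hwf with rfl | rfl
              · exact absurd rfl hw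
              · rfl
            refine ⟨evv', ?_, by simp only [hc', dif_neg h]⟩
            rw [hevv', hwv']
            exact Sym2.mem_iff.mpr (Or.inr rfl)
        exact (Set.ncard_le_ncard hsub (Set.toFinite _)).trans (hcv _)
    have hins : Set.range c ⊆ insert (c euv) (Set.range c') := by
      rintro x ⟨e, rfl⟩
      by_cases hv : v ∈ (e : Sym2 V)
      · rcases L1 e e.2 hv with h | h
        · left
          exact congrArg c (Subtype.ext h)
        · right
          refine ⟨fuv', ?_⟩
          have hmap : Sym2.map Subtype.val (fuv' : Sym2 {x : V // x ≠ v}) = s(u, v') := by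
            simp [hfuv', hU, hV2, Sym2.map_pair_eq]
          have hnot : ¬ Sym2.map Subtype.val (fuv' : Sym2 {x : V // x ≠ v}) ∈ G.edgeSet := by
            rw [hmap]
            exact hnadj
          simp only [hc', dif_neg hnot]
          exact congrArg c (Subtype.ext h.symm)
      · obtain ⟨f, hf⟩ := L3 e e.2 hv
        right
        refine ⟨f, ?_⟩
        have h : Sym2.map Subtype.val (f : Sym2 {x : V // x ≠ v}) ∈ G.edgeSet := by
          rw [hf]; exact e.2
        simp only [hc', dif_pos h]
        exact congrArg c (Subtype.ext hf)
    have hk'le : k' ≤ (Set.range c').ncard + 1 := by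
      have h1 : (Set.range c).ncard = k' := by
        rw [Set.range_eq_univ.mpr hcs, Set.ncard_univ]
        simp
      calc k' = (Set.range c).ncard := h1.symm
        _ ≤ (insert (c euv) (Set.range c')).ncard := Set.ncard_le_ncard hins (Set.toFinite _)
        _ ≤ (Set.range c').ncard + 1 := Set.ncard_insert_le _ _
    obtain ⟨c'', hs'', hv''⟩ := compress c' hvalid'
    exact ⟨(Set.range c').ncard, by omega, c'', hs'', hv''⟩
  · -- backward
    rintro ⟨k'', hk'', c', hcs', hcv'⟩
    set euv : G.edgeSet := ⟨s(u, v), huv⟩ with heuv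
    set evv' : G.edgeSet := ⟨s(v, v'), hvv'⟩ with hevv'
    set euu' : G.edgeSet := ⟨s(u, u'), hadjuu'⟩ with heuu'
    set c : G.edgeSet → Fin (k'' + 1) := fun e =>
      if h : (e : Sym2 V) = s(u, v) then Fin.last k''
      else if h2 : v ∈ (e : Sym2 V) then (c' fuv').castSucc
      else ((c' (L3 (e : Sym2 V) e.2 h2).choose).castSucc) with hc
    have hsuv : s(v, v') ≠ s(u, v) := by
      intro h
      rcases Sym2.eq_iff.mp h with ⟨h1, _⟩ | ⟨_, h2⟩
      · exact hu h1.symm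
      · exact hne h2
    have hsurj : Function.Surjective c := by
      intro j
      by_cases hj : j = Fin.last k''
      · exact ⟨euv, by simp only [hc, heuv, dif_pos rfl, hj]⟩
      · obtain ⟨i, rfl⟩ := Fin.exists_castSucc_eq.mpr hj
        obtain ⟨f, rfl⟩ := hcs' i
        by_cases hff : f = fuv'
        · refine ⟨evv', ?_⟩
          have h2 : v ∈ (evv' : Sym2 V) := Sym2.mem_iff.mpr (Or.inl rfl)
          simp only [hc, dif_neg (show (evv' : Sym2 V) ≠ s(u, v) from hsuv), dif_pos h2, hff]
        · have h := (L2 f).resolve_right hff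
          refine ⟨⟨_, h⟩, ?_⟩
          have hnv : v ∉ (⟨_, h⟩ : G.edgeSet).1 := Lnv _
          have h1 : ((⟨_, h⟩ : G.edgeSet) : Sym2 V) ≠ s(u, v) := by
            intro hh
            exact hnv (hh ▸ Sym2.mem_iff.mpr (Or.inr rfl))
          simp only [hc, dif_neg h1, dif_neg hnv]
          congr 1
          congr 1
          apply Subtype.ext
          exact Sym2.map.injective Subtype.val_injective
            ((L3 _ (⟨_, h⟩ : G.edgeSet).2 hnv).choose_spec)
    have hpair : ∀ (a b : Fin (k'' + 1)), ({a, b} : Set (Fin (k'' + 1))).ncard ≤ 2 :=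
      fun a b => (Set.ncard_insert_le _ _).trans (by simp)
    have hvalid : TwoValid c := by
      intro w
      by_cases hwv : w = v
      · subst hwv
        have hsub : palette c w ⊆ {Fin.last k'', (c' fuv').castSucc} := by
          rintro i ⟨e, he, rfl⟩
          by_cases h : (e : Sym2 V) = s(u, w)
          · left
            simp only [hc, dif_pos h]
          · right
            simp only [hc, dif_neg h, dif_pos he]
            rfl
        exact (Set.ncard_le_ncard hsub (Set.toFinite _)).trans (hpair _ _)
      by_cases hwu : w = u
      · subst hwu
        have hsub : palette c w ⊆ {Fin.last k'', c euu'} := by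
          rintro i ⟨e, he, rfl⟩
          by_cases h : (e : Sym2 V) = s(w, v)
          · left
            simp only [hc, dif_pos h]
          · by_cases h2 : v ∈ (e : Sym2 V)
            · exfalso
              have := (L1 e e.2 h2).resolve_left h
              rw [this] at he
              rcases Sym2.mem_iff.mp he with h3 | h3
              · exact hu h3
              · exact hne h3.symm
            · right
              have heq : e = euu' := Subtype.ext (L4 e e.2 he h2)
              rw [heq]
              rfl
        exact (Set.ncard_le_ncard hsub (Set.toFinite _)).trans (hpair _ _)
      · have hsub : palette c w ⊆ Fin.castSucc '' palette c' ⟨w, hwv⟩ := by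
          rintro i ⟨e, he, rfl⟩
          by_cases h : (e : Sym2 V) = s(u, v)
          · exfalso
            rw [h] at he
            rcases Sym2.mem_iff.mp he with h3 | h3
            · exact hwu h3
            · exact hwv h3
          · by_cases h2 : v ∈ (e : Sym2 V)
            · have hev : (e : Sym2 V) = s(v, v') := (L1 e e.2 h2).resolve_left h
              have hwv' : w = v' := by
                rw [hev] at he
                rcases Sym2.mem_iff.mp he with h3 | h3
                · exact absurd h3 hwv
                · exact h3
              refine ⟨c' fuv', ⟨fuv', ?_, rfl⟩, ?_⟩
              · show (⟨w, hwv⟩ : {x : V // x ≠ v}) ∈ (fuv' : Sym2 {x : V // x ≠ v})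
                rw [hfuv']
                exact Sym2.mem_iff.mpr (Or.inr (Subtype.ext (by rw [hV2]; exact hwv')))
              · simp only [hc, dif_neg h, dif_pos h2]
            · refine ⟨c' (L3 (e : Sym2 V) e.2 h2).choose, ⟨(L3 (e : Sym2 V) e.2 h2).choose, ?_, rfl⟩, ?_⟩
              · apply (Lmem _ _).mpr
                rw [(L3 (e : Sym2 V) e.2 h2).choose_spec]
                exact he
              · simp only [hc, dif_neg h, dif_neg h2]
        calc (palette c w).ncard ≤ (Fin.castSucc '' palette c' ⟨w, hwv⟩).ncard :=
              Set.ncard_le_ncard hsub (Set.toFinite _)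
          _ = (palette c' ⟨w, hwv⟩).ncard :=
              Set.ncard_image_of_injective _ (Fin.castSucc_injective _)
          _ ≤ 2 := hcv' _
    exact ⟨k'' + 1, by omega, c, hsurj, hvalid⟩
end

section
/- There is a constant C such that the following holds. Let G be a finite simple graph on n vertices that contains no pair of adjacent vertices both of degree 2, and suppose G admits a 2-valid edge coloring using at least n−k colors, where k ≥ 1. Then n ≤ C·k. -/
set_option linter.unusedSectionVars false

section Aux
open Finset
variable {V : Type} [Fintype V] [DecidableEq V] {G : SimpleGraph V} {k' : ℕ}

/-- finset version of the palette -/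
noncomputable def Pf (c : G.edgeSet → Fin k') (v : V) : Finset (Fin k') :=
  (Set.toFinite (palette c v)).toFinset

lemma mem_Pf {c : G.edgeSet → Fin k'} {v : V} {i : Fin k'} :
    i ∈ Pf c v ↔ ∃ e : G.edgeSet, v ∈ (e : Sym2 V) ∧ c e = i := by
  simp [Pf, palette]

lemma card_Pf (c : G.edgeSet → Fin k') (v : V) : (Pf c v).card = (palette c v).ncard := by
  rw [Pf, Set.ncard_eq_toFinset_card _ (Set.toFinite _)]

/-- number of vertices seeing color i -/
noncomputable def Dcol (c : G.edgeSet → Fin k') (i : Fin k') : ℕ :=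
  (univ.filter fun v : V => i ∈ Pf c v).card

lemma sum_card_Pf (c : G.edgeSet → Fin k') :
    ∑ v : V, (Pf c v).card = ∑ i : Fin k', Dcol c i := by
  have h1 : ∀ v : V, (Pf c v).card = ∑ i : Fin k', if i ∈ Pf c v then 1 else 0 := by
    intro v
    rw [Finset.sum_ite_mem]
    simp [Finset.univ_inter]
  have h2 : ∀ i : Fin k', Dcol c i = ∑ v : V, if i ∈ Pf c v then 1 else 0 := by
    intro i
    rw [Dcol, Finset.card_filter]
  simp_rw [h1, h2]
  exact Finset.sum_comm

lemma two_le_Dcol {c : G.edgeSet → Fin k'} (hs : Function.Surjective c) (i : Fin k') :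
    2 ≤ Dcol c i := by
  obtain ⟨e, he⟩ := hs i
  obtain ⟨⟨s, hs'⟩, rfl⟩ : ∃ p : G.edgeSet, p = e := ⟨e, rfl⟩
  induction' s with x y
  have hadj : G.Adj x y := hs'
  have hxy : x ≠ y := hadj.ne
  have hx : x ∈ univ.filter fun v : V => i ∈ Pf c v := by
    simp only [mem_filter, mem_univ, true_and, mem_Pf]
    exact ⟨⟨s(x, y), hs'⟩, by simp, he⟩
  have hy : y ∈ univ.filter fun v : V => i ∈ Pf c v := by
    simp only [mem_filter, mem_univ, true_and, mem_Pf]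
    exact ⟨⟨s(x, y), hs'⟩, by simp, he⟩
  exact Finset.one_lt_card.mpr ⟨x, hx, y, hy, hxy⟩

lemma single_edge {c : G.edgeSet → Fin k'} {i : Fin k'} (hi : Dcol c i ≤ 2)
    (e e' : G.edgeSet) (he : c e = i) (he' : c e' = i) : e = e' := by
  have key : ∀ f : G.edgeSet, c f = i → ∀ x y : V, (f : Sym2 V) = s(x, y) →
      x ∈ univ.filter (fun v : V => i ∈ Pf c v) ∧ y ∈ univ.filter (fun v : V => i ∈ Pf c v) := by
    intro f hf x y hxy
    constructor <;>
    · simp only [mem_filter, mem_univ, true_and, mem_Pf]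
      exact ⟨f, by rw [hxy]; simp, hf⟩
  obtain ⟨⟨se, hegr⟩, rfl⟩ : ∃ p : G.edgeSet, p = e := ⟨e, rfl⟩
  obtain ⟨⟨se', hegr'⟩, rfl⟩ : ∃ p : G.edgeSet, p = e' := ⟨e', rfl⟩
  induction' se with x y
  induction' se' with x' y'
  have hxy : x ≠ y := (G.ne_of_adj hegr)
  have hxy' : x' ≠ y' := (G.ne_of_adj hegr')
  obtain ⟨hx, hy⟩ := key _ he x y rfl
  obtain ⟨hx', hy'⟩ := key _ he' x' y' rfl
  have hsub : ({x, y} : Finset V) ⊆ univ.filter (fun v : V => i ∈ Pf c v) := by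
    intro z hz; simp only [mem_insert, mem_singleton] at hz
    rcases hz with rfl | rfl <;> assumption
  have hcard2 : ({x, y} : Finset V).card = 2 := Finset.card_pair hxy
  have heq : univ.filter (fun v : V => i ∈ Pf c v) = ({x, y} : Finset V) :=
    (Finset.eq_of_subset_of_card_le hsub (by rw [hcard2]; exact hi)).symm
  rw [heq, mem_insert, mem_singleton] at hx' hy'
  apply Subtype.ext
  show s(x, y) = s(x', y')
  rcases hx' with rfl | rfl <;> rcases hy' with rfl | rfl
  · exact absurd rfl hxy'
  · rfl
  · exact Sym2.eq_swap
  · exact absurd rfl hxy'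

end Aux

open Finset in
lemma ncard_neighbor {V : Type} [Fintype V] [DecidableEq V] {G : SimpleGraph V} {k' : ℕ}
    {c : G.edgeSet → Fin k'} (htv : TwoValid c) {v : V} (h2 : 2 ≤ (Pf c v).card)
    (hgood : ∀ i ∈ Pf c v, Dcol c i ≤ 2) : (G.neighborSet v).ncard = 2 := by
  classical
  have hne : (Pf c v).Nonempty := Finset.card_pos.mp (by omega)
  obtain ⟨i0, hi0⟩ := hne
  have hNfin : (G.neighborSet v).Finite := Set.toFinite _
  set N : Finset V := hNfin.toFinset with hN
  have hmemN : ∀ u, u ∈ N ↔ G.Adj v u := by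
    intro u; rw [hN, Set.Finite.mem_toFinset]; rfl
  have hcardPf : (Pf c v).card = 2 := by
    have := htv v; rw [← card_Pf] at this; omega
  rw [Set.ncard_eq_toFinset_card _ hNfin]
  -- the coloring function on neighbors
  have hle : N.card ≤ (Pf c v).card := by
    apply Finset.card_le_card_of_injOn
      (fun u => if h : G.Adj v u then c ⟨s(v, u), h⟩ else i0)
    · intro u hu
      rw [Finset.mem_coe, hmemN] at hu
      dsimp only; rw [dif_pos hu]
      exact mem_Pf.mpr ⟨⟨s(v, u), hu⟩, by simp, rfl⟩
    · intro u hu u' hu' hfe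
      rw [Finset.mem_coe, hmemN] at hu hu'
      dsimp only at hfe
      rw [dif_pos hu, dif_pos hu'] at hfe
      have hj : c ⟨s(v, u), hu⟩ ∈ Pf c v := mem_Pf.mpr ⟨⟨s(v, u), hu⟩, by simp, rfl⟩
      have := single_edge (hgood _ hj) ⟨s(v, u), hu⟩ ⟨s(v, u'), hu'⟩ rfl hfe.symm
      have : s(v, u) = s(v, u') := congrArg Subtype.val this
      exact (Sym2.congr_right).mp this
  have hge : (Pf c v).card ≤ N.card := by
    apply Finset.card_le_card_of_injOn
      (fun i => if h : ∃ e : G.edgeSet, v ∈ (e : Sym2 V) ∧ c e = i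
        then Sym2.Mem.other h.choose_spec.1 else v)
    · intro i hi
      have h : ∃ e : G.edgeSet, v ∈ (e : Sym2 V) ∧ c e = i := mem_Pf.mp hi
      dsimp only; rw [dif_pos h, Finset.mem_coe, hmemN]
      have hspec := Sym2.other_spec h.choose_spec.1
      rw [← SimpleGraph.mem_edgeSet, hspec]
      exact h.choose.2
    · intro i hi i' hi' hfe
      rw [Finset.mem_coe] at hi hi'
      have h : ∃ e : G.edgeSet, v ∈ (e : Sym2 V) ∧ c e = i := mem_Pf.mp hi
      have h' : ∃ e : G.edgeSet, v ∈ (e : Sym2 V) ∧ c e = i' := mem_Pf.mp hi'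
      dsimp only at hfe
      rw [dif_pos h, dif_pos h'] at hfe
      have hspec := Sym2.other_spec h.choose_spec.1
      have hspec' := Sym2.other_spec h'.choose_spec.1
      have heq : (h.choose : Sym2 V) = (h'.choose : Sym2 V) := by
        rw [← hspec, ← hspec', hfe]
      have : h.choose = h'.choose := Subtype.ext heq
      rw [← h.choose_spec.2, ← h'.choose_spec.2, this]
  rw [← hN]
  omega

/-- Linear kernel: there is a constant `C` such that any graph on `n` vertices with no pair
of adjacent degree-two vertices that admits a `2`-valid edge coloring using at least `n - k`
colors (`k ≥ 1`) satisfies `n ≤ C * k`. -/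
theorem stmt11 : ∃ C : ℕ, ∀ (V : Type) [Fintype V] (G : SimpleGraph V) (k k' : ℕ),
    1 ≤ k →
    (∀ u v : V, G.Adj u v →
      ¬ ((G.neighborSet u).ncard = 2 ∧ (G.neighborSet v).ncard = 2)) →
    Fintype.card V - k ≤ k' →
    (∃ c : G.edgeSet → Fin k', Function.Surjective c ∧ TwoValid c) →
    Fintype.card V ≤ C * k := by
  classical
  use 24
  intro V _ G k k' hk hNo hk' ⟨c, hsurj, htv⟩
  set n := Fintype.card V with hn
  -- dispose of the degenerate case k' = 0
  rcases Nat.eq_zero_or_pos k' with rfl | hk'pos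
  · omega
  have i0 : Fin k' := ⟨0, hk'pos⟩
  -- basic objects
  set bad : V → Prop := fun v => (Pf c v).card ≤ 1 ∨ ∃ i ∈ Pf c v, ¬ (Dcol c i ≤ 2) with hbad
  set B : Finset V := Finset.univ.filter bad with hBdef
  set GV : Finset V := Finset.univ.filter (fun v => ¬ bad v) with hGVdef
  set GC : Finset (Fin k') := Finset.univ.filter (fun i => Dcol c i ≤ 2) with hGCdef
  set BC : Finset (Fin k') := Finset.univ.filter (fun i => ¬ (Dcol c i ≤ 2)) with hBCdef
  have hPfle : ∀ v : V, (Pf c v).card ≤ 2 := by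
    intro v; rw [card_Pf]; exact htv v
  -- counting facts
  have h_s_eq : ∑ v : V, (Pf c v).card = ∑ i : Fin k', Dcol c i := sum_card_Pf c
  have h_st : (∑ v : V, (Pf c v).card) +
      (Finset.univ.filter fun v : V => (Pf c v).card ≤ 1).card ≤ 2 * n := by
    rw [Finset.card_filter, ← Finset.sum_add_distrib]
    calc ∑ v : V, ((Pf c v).card + if (Pf c v).card ≤ 1 then 1 else 0)
        ≤ ∑ _v : V, 2 := by
          apply Finset.sum_le_sum
          intro v _
          have := hPfle v
          split <;> omega
      _ = 2 * n := by rw [Finset.sum_const, Finset.card_univ, smul_eq_mul, mul_comm]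
  have h_partC : GC.card + BC.card = k' := by
    rw [hGCdef, hBCdef, Finset.card_filter_add_card_filter_not, Finset.card_univ,
      Fintype.card_fin]
  have h_split : ∑ i : Fin k', Dcol c i = (∑ i ∈ GC, Dcol c i) + ∑ i ∈ BC, Dcol c i := by
    rw [hGCdef, hBCdef, Finset.sum_filter_add_sum_filter_not]
  have h_sumGC : ∑ i ∈ GC, Dcol c i = 2 * GC.card := by
    rw [Finset.sum_congr rfl (fun i hi => ?_), Finset.sum_const, smul_eq_mul, mul_comm]
    · rw [hGCdef, Finset.mem_filter] at hi
      have := two_le_Dcol hsurj i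
      omega
  have h_sumBC : 3 * BC.card ≤ ∑ i ∈ BC, Dcol c i := by
    have h3 : ∀ i ∈ BC, 3 ≤ Dcol c i := by
      intro i hi
      rw [hBCdef, Finset.mem_filter] at hi
      omega
    have := Finset.card_nsmul_le_sum BC (fun i => Dcol c i) 3 h3
    simpa [smul_eq_mul, mul_comm] using this
  have h_bv2 : (Finset.univ.filter fun v : V => ∃ i ∈ Pf c v, ¬ (Dcol c i ≤ 2)).card ≤
      ∑ i ∈ BC, Dcol c i := by
    calc (Finset.univ.filter fun v : V => ∃ i ∈ Pf c v, ¬ (Dcol c i ≤ 2)).card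
        ≤ (BC.biUnion fun i => Finset.univ.filter fun v : V => i ∈ Pf c v).card := by
          apply Finset.card_le_card
          intro v hv
          rw [Finset.mem_filter] at hv
          obtain ⟨-, i, hiPf, hiD⟩ := hv
          exact Finset.mem_biUnion.mpr ⟨i, by
            rw [hBCdef]; exact Finset.mem_filter.mpr ⟨Finset.mem_univ _, hiD⟩,
            Finset.mem_filter.mpr ⟨Finset.mem_univ _, hiPf⟩⟩
      _ ≤ ∑ i ∈ BC, Dcol c i := Finset.card_biUnion_le
  have h_B : B.card ≤ (Finset.univ.filter fun v : V => (Pf c v).card ≤ 1).card +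
      (Finset.univ.filter fun v : V => ∃ i ∈ Pf c v, ¬ (Dcol c i ≤ 2)).card := by
    calc B.card ≤ ((Finset.univ.filter fun v : V => (Pf c v).card ≤ 1) ∪
        (Finset.univ.filter fun v : V => ∃ i ∈ Pf c v, ¬ (Dcol c i ≤ 2))).card := by
          apply Finset.card_le_card
          intro v hv
          rw [hBdef, Finset.mem_filter, hbad] at hv
          rcases hv.2 with h | h
          · exact Finset.mem_union_left _ (Finset.mem_filter.mpr ⟨Finset.mem_univ _, h⟩)
          · exact Finset.mem_union_right _ (Finset.mem_filter.mpr ⟨Finset.mem_univ _, h⟩)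
      _ ≤ _ := Finset.card_union_le _ _
  have h_part : GV.card + B.card = n := by
    rw [hGVdef, hBdef, add_comm, Finset.card_filter_add_card_filter_not,
      Finset.card_univ]
  -- property of good vertices
  have hGVgood : ∀ v ∈ GV, 2 ≤ (Pf c v).card ∧ ∀ i ∈ Pf c v, Dcol c i ≤ 2 := by
    intro v hv
    rw [hGVdef, Finset.mem_filter, hbad] at hv
    have hv2 := hv.2
    constructor
    · by_contra h
      exact hv2 (Or.inl (by omega))
    · intro i hi
      by_contra h
      exact hv2 (Or.inr ⟨i, hi, h⟩)
  have hGVncard : ∀ v ∈ GV, (G.neighborSet v).ncard = 2 := by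
    intro v hv
    obtain ⟨h1, h2⟩ := hGVgood v hv
    exact ncard_neighbor htv h1 h2
  -- the injection from good vertices to (bad vertex, color) pairs
  have hex : ∀ v : V, ∃ p : V × Fin k', v ∈ GV →
      p.1 ∈ B ∧ p.2 ∈ Pf c p.1 ∧ p.2 ∈ Pf c v ∧
        ∃ e : G.edgeSet, c e = p.2 ∧ (e : Sym2 V) = s(v, p.1) := by
    intro v
    by_cases hv : v ∈ GV
    · obtain ⟨h2c, hgood⟩ := hGVgood v hv
      obtain ⟨a, ha⟩ := Finset.card_pos.mp (by omega : 0 < (Pf c v).card)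
      obtain ⟨e, hve, hce⟩ := mem_Pf.mp ha
      set u := Sym2.Mem.other hve with hu
      have hspec : s(v, u) = (e : Sym2 V) := Sym2.other_spec hve
      have hadj : G.Adj v u := by rw [← SimpleGraph.mem_edgeSet, hspec]; exact e.2
      have huB : u ∈ B := by
        by_contra huB
        have huGV : u ∈ GV := by
          rw [hGVdef, Finset.mem_filter]
          rw [hBdef, Finset.mem_filter] at huB
          exact ⟨Finset.mem_univ _, fun h => huB ⟨Finset.mem_univ _, h⟩⟩
        exact hNo v u hadj ⟨hGVncard v hv, hGVncard u huGV⟩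
      refine ⟨(u, a), fun _ => ⟨huB, ?_, ha, e, hce, hspec.symm⟩⟩
      exact mem_Pf.mpr ⟨e, Sym2.other_mem hve, hce⟩
    · exact ⟨(v, i0), fun h => absurd h hv⟩
  choose g hg using hex
  set T : Finset (V × Fin k') := B.biUnion (fun u => (Pf c u).image fun i => (u, i)) with hT
  have hGVT : GV.card ≤ T.card := by
    apply Finset.card_le_card_of_injOn g
    · intro v hv
      obtain ⟨hB1, hPf1, -, -⟩ := hg v hv
      rw [hT]
      exact Finset.mem_biUnion.mpr ⟨(g v).1, hB1, Finset.mem_image.mpr ⟨(g v).2, hPf1, rfl⟩⟩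
    · intro v hv v' hv' hfe
      rw [Finset.mem_coe] at hv hv'
      obtain ⟨-, -, hPfv, e, hce, hes⟩ := hg v hv
      obtain ⟨-, -, hPfv', e', hce', hes'⟩ := hg v' hv'
      rw [hfe] at hPfv hce hes
      have hgood := (hGVgood v' hv').2 _ hPfv'
      have he : e = e' := single_edge hgood e e' hce hce'
      rw [he, hes'] at hes
      exact (Sym2.congr_left).mp hes.symm
  have hTcard : T.card ≤ 2 * B.card := by
    rw [hT]
    calc (B.biUnion fun u => (Pf c u).image fun i => (u, i)).card
        ≤ ∑ u ∈ B, ((Pf c u).image fun i => (u, i)).card := Finset.card_biUnion_le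
      _ ≤ ∑ _u ∈ B, 2 := by
          apply Finset.sum_le_sum
          intro u _
          exact le_trans (Finset.card_image_le) (hPfle u)
      _ = 2 * B.card := by rw [Finset.sum_const, smul_eq_mul, mul_comm]
  omega
end

section
/- Let c be a 2-valid edge coloring of a finite simple graph G, let T be a nonempty set of vertices of G, and let I_T be a set of vertices of G, disjoint from T, each of whose neighborhood in G is exactly T. Then the number of distinct palettes among the vertices of I_T satisfies |{c†(v) : v ∈ I_T}| ≤ max{10, |T|+1}. -/
open Set

lemma ncard_prod' {α β : Type*} (A : Set α) (B : Set β) :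
    (A ×ˢ B).ncard = A.ncard * B.ncard := by
  rw [← Nat.card_coe_set_eq, ← Nat.card_coe_set_eq, ← Nat.card_coe_set_eq,
    Nat.card_congr (Equiv.Set.prod A B), Nat.card_prod]

lemma pair_rep' {C : Type*} [Finite C] {P : Set C} (hne : P.Nonempty)
    (h2 : P.ncard ≤ 2) : ∃ x y, P = {x, y} := by
  have h0 : 0 < P.ncard := (Set.ncard_pos P.toFinite).mpr hne
  have h12 : P.ncard = 1 ∨ P.ncard = 2 := by omega
  rcases h12 with h | h
  · obtain ⟨a, rfl⟩ := Set.ncard_eq_one.mp h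
    exact ⟨a, a, by simp⟩
  · obtain ⟨a, b, -, rfl⟩ := Set.ncard_eq_two.mp h
    exact ⟨a, b, rfl⟩

lemma count_le' {C : Type*} [Finite C] (Ps : Set (Set C)) (U : Set C)
    (hne : ∀ P ∈ Ps, P.Nonempty) (h2 : ∀ P ∈ Ps, P.ncard ≤ 2)
    (hsub : ∀ P ∈ Ps, P ⊆ U) : Ps.ncard ≤ U.ncard * U.ncard := by
  classical
  rcases Ps.eq_empty_or_nonempty with rfl | ⟨P0, hP0⟩
  · simp
  obtain ⟨c0, -⟩ := hne P0 hP0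
  set F : Set C → C × C := fun P =>
    if h : ∃ x y, P = ({x, y} : Set C) then (h.choose, h.choose_spec.choose)
    else (c0, c0) with hF
  have hFspec : ∀ P ∈ Ps, P = {(F P).1, (F P).2} := by
    intro P hP
    have h : ∃ x y, P = ({x, y} : Set C) := pair_rep' (hne P hP) (h2 P hP)
    simp only [hF, dif_pos h]
    exact h.choose_spec.choose_spec
  have hmaps : ∀ P ∈ Ps, F P ∈ U ×ˢ U := by
    intro P hP
    have h := hFspec P hP
    have h1 : (F P).1 ∈ P := by
      have : (F P).1 ∈ ({(F P).1, (F P).2} : Set C) := Set.mem_insert _ _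
      rwa [← h] at this
    have h2' : (F P).2 ∈ P := by
      have : (F P).2 ∈ ({(F P).1, (F P).2} : Set C) := Set.mem_insert_iff.mpr (Or.inr rfl)
      rwa [← h] at this
    exact ⟨hsub P hP h1, hsub P hP h2'⟩
  have hinj : Set.InjOn F Ps := by
    intro P hP Q hQ hPQ
    rw [hFspec P hP, hFspec Q hQ, hPQ]
  calc Ps.ncard ≤ (U ×ˢ U).ncard :=
        Set.ncard_le_ncard_of_injOn F hmaps hinj (Set.toFinite _)
    _ = U.ncard * U.ncard := ncard_prod' U U

lemma diff_subsingleton' {C : Type*} [Finite C] {A : Set C} (h2 : A.ncard ≤ 2) {a : C}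
    (ha : a ∈ A) : (A \ {a}).Subsingleton := by
  intro x hx y hy
  by_contra hxy
  have hsub : ({a, x, y} : Set C) ⊆ A := by
    rintro z (rfl | rfl | rfl)
    · exact ha
    · exact hx.1
    · exact hy.1
  have hax : a ∉ ({x, y} : Set C) := by
    rintro (rfl | rfl)
    · exact hx.2 rfl
    · exact hy.2 rfl
  have h3 : ({a, x, y} : Set C).ncard = 3 := by
    rw [Set.ncard_insert_of_notMem hax, Set.ncard_pair hxy]
  have := Set.ncard_le_ncard hsub A.toFinite
  omega

lemma abstract_bound {ι C : Type*} [Finite C] {s : Set ι} (hsfin : s.Finite)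
    (g : ι → Set C) (hg2 : ∀ t ∈ s, (g t).ncard ≤ 2)
    {Ps : Set (Set C)}
    (hPne : ∀ P ∈ Ps, P.Nonempty) (hP2 : ∀ P ∈ Ps, P.ncard ≤ 2)
    (hmeet : ∀ P ∈ Ps, ∀ t ∈ s, (P ∩ g t).Nonempty)
    (hsub : ∀ P ∈ Ps, ∀ x ∈ P, ∃ t ∈ s, x ∈ g t) :
    Ps.ncard ≤ max 10 (s.ncard + 1) := by
  classical
  rcases Ps.eq_empty_or_nonempty with rfl | ⟨Q, hQmem⟩
  · simp
  obtain ⟨c0, hc0⟩ := hPne Q hQmem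
  obtain ⟨t0, ht0, -⟩ := hsub Q hQmem c0 hc0
  by_cases hdis : ∃ t1 ∈ s, ∃ t2 ∈ s, Disjoint (g t1) (g t2)
  · -- two disjoint palettes: at most 4 palettes
    obtain ⟨t1, ht1, t2, ht2, hd⟩ := hdis
    set F : Set C → C × C := fun P =>
      (if h : (P ∩ g t1).Nonempty then h.choose else c0,
       if h : (P ∩ g t2).Nonempty then h.choose else c0) with hF
    have key : ∀ P ∈ Ps, (F P).1 ∈ P ∩ g t1 ∧ (F P).2 ∈ P ∩ g t2 ∧
        P = {(F P).1, (F P).2} := by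
      intro P hP
      have h1 := hmeet P hP t1 ht1
      have h2 := hmeet P hP t2 ht2
      have m1 : (F P).1 ∈ P ∩ g t1 := by
        simp only [hF, dif_pos h1]; exact h1.choose_spec
      have m2 : (F P).2 ∈ P ∩ g t2 := by
        simp only [hF, dif_pos h2]; exact h2.choose_spec
      refine ⟨m1, m2, ?_⟩
      have hne12 : (F P).1 ≠ (F P).2 := by
        intro h
        exact Set.disjoint_left.mp hd m1.2 (h ▸ m2.2)
      have hsub12 : ({(F P).1, (F P).2} : Set C) ⊆ P := by
        rintro z (rfl | rfl)
        · exact m1.1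
        · exact m2.1
      refine (Set.eq_of_subset_of_ncard_le hsub12 ?_ P.toFinite).symm
      rw [Set.ncard_pair hne12]
      exact hP2 P hP
    have hmaps : ∀ P ∈ Ps, F P ∈ g t1 ×ˢ g t2 := fun P hP =>
      ⟨(key P hP).1.2, (key P hP).2.1.2⟩
    have hinj : Set.InjOn F Ps := by
      intro P hP Q' hQ' hPQ
      rw [(key P hP).2.2, (key Q' hQ').2.2, hPQ]
    have hb : Ps.ncard ≤ 4 := by
      calc Ps.ncard ≤ (g t1 ×ˢ g t2).ncard :=
            Set.ncard_le_ncard_of_injOn F hmaps hinj (Set.toFinite _)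
        _ = (g t1).ncard * (g t2).ncard := ncard_prod' _ _
        _ ≤ 2 * 2 := Nat.mul_le_mul (hg2 t1 ht1) (hg2 t2 ht2)
        _ = 4 := rfl
    exact le_trans hb (le_trans (by norm_num) (le_max_left _ _))
  · push_neg at hdis
    have hint : ∀ t1 ∈ s, ∀ t2 ∈ s, (g t1 ∩ g t2).Nonempty := by
      intro t1 ht1 t2 ht2
      exact Set.not_disjoint_iff_nonempty_inter.mp (hdis t1 ht1 t2 ht2)
    by_cases hcom : ∃ a, ∀ t ∈ s, a ∈ g t
    · -- common element case
      obtain ⟨a, ha⟩ := hcom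
      set X : Set C := ⋃ t ∈ s, (g t \ {a}) with hX
      have hXs : ∀ t ∈ s, (g t \ {a}).Subsingleton := fun t ht =>
        diff_subsingleton' (hg2 t ht) (ha t ht)
      have hXcard : X.ncard ≤ s.ncard := by
        set f : ι → C := fun t => if h : (g t \ {a}).Nonempty then h.choose else a with hf
        have hXf : X ⊆ f '' s := by
          intro x hx
          simp only [hX, Set.mem_iUnion] at hx
          obtain ⟨t, ht, hxt⟩ := hx
          refine ⟨t, ht, ?_⟩
          have hne : (g t \ {a}).Nonempty := ⟨x, hxt⟩
          simp only [hf, dif_pos hne]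
          exact hXs t ht hne.choose_spec hxt
        exact le_trans (Set.ncard_le_ncard hXf (Set.toFinite _))
          (Set.ncard_image_le hsfin)
      have hsubX : ∀ P ∈ Ps, P ⊆ insert a X := by
        intro P hP x hx
        obtain ⟨t, ht, hxt⟩ := hsub P hP x hx
        by_cases hxa : x = a
        · exact hxa ▸ Set.mem_insert a X
        · refine Set.mem_insert_iff.mpr (Or.inr ?_)
          simp only [hX, Set.mem_iUnion]
          exact ⟨t, ht, hxt, hxa⟩
      set Pa := {P ∈ Ps | a ∈ P} with hPa
      set Pn := {P ∈ Ps | a ∉ P} with hPn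
      have hcover : Ps = Pa ∪ Pn := by
        ext P
        simp only [hPa, hPn, Set.mem_union, Set.mem_setOf_eq]
        by_cases h : a ∈ P <;> tauto
      have hPaB : Pa.ncard ≤ X.ncard + 1 := by
        set F : Set C → C := fun P => if h : (P \ {a}).Nonempty then h.choose else a with hF
        have hrep : ∀ P ∈ Pa, (P \ {a}).Nonempty → (F P ∈ X ∧ P = {a, F P}) := by
          intro P hP hne
          have hFP : F P ∈ P \ {a} := by simp only [hF, dif_pos hne]; exact hne.choose_spec
          constructor
          · obtain ⟨t, ht, hxt⟩ := hsub P hP.1 (F P) hFP.1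
            simp only [hX, Set.mem_iUnion]
            exact ⟨t, ht, hxt, hFP.2⟩
          · apply Set.Subset.antisymm
            · intro x hx
              by_cases hxa : x = a
              · exact Set.mem_insert_iff.mpr (Or.inl hxa)
              · have : x ∈ P \ {a} := ⟨hx, hxa⟩
                have := diff_subsingleton' (hP2 P hP.1) hP.2 this hFP
                exact this ▸ Set.mem_insert_iff.mpr (Or.inr rfl)
            · rintro z (rfl | rfl)
              · exact hP.2
              · exact hFP.1
        have hdeg : ∀ P ∈ Pa, ¬(P \ {a}).Nonempty → (P = {a} ∧ F P = a) := by
          intro P hP hne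
          have hsub' : P ⊆ {a} := by
            rw [← Set.diff_eq_empty]
            exact Set.not_nonempty_iff_eq_empty.mp hne
          exact ⟨Set.Subset.antisymm hsub' (by simpa using hP.2),
            by simp only [hF, dif_neg hne]⟩
        have hmaps : ∀ P ∈ Pa, F P ∈ insert a X := by
          intro P hP
          by_cases h : (P \ {a}).Nonempty
          · exact Set.mem_insert_iff.mpr (Or.inr (hrep P hP h).1)
          · exact (hdeg P hP h).2 ▸ Set.mem_insert a X
        have hinj : Set.InjOn F Pa := by
          intro P hP Q' hQ' hPQ
          by_cases h1 : (P \ {a}).Nonempty <;> by_cases h2 : (Q' \ {a}).Nonempty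
          · rw [(hrep P hP h1).2, (hrep Q' hQ' h2).2, hPQ]
          · exfalso
            have hne : F P ≠ a := by
              have hFP : F P ∈ P \ {a} := by
                simp only [hF, dif_pos h1]; exact h1.choose_spec
              exact hFP.2
            exact hne (hPQ ▸ (hdeg Q' hQ' h2).2)
          · exfalso
            have hne : F Q' ≠ a := by
              have hFQ : F Q' ∈ Q' \ {a} := by
                simp only [hF, dif_pos h2]; exact h2.choose_spec
              exact hFQ.2
            exact hne (hPQ ▸ (hdeg P hP h1).2)
          · rw [(hdeg P hP h1).1, (hdeg Q' hQ' h2).1]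
        calc Pa.ncard ≤ (insert a X).ncard :=
              Set.ncard_le_ncard_of_injOn F hmaps hinj (Set.toFinite _)
          _ ≤ X.ncard + 1 := Set.ncard_insert_le a X
      have hsum : Ps.ncard ≤ Pa.ncard + Pn.ncard := by
        rw [hcover]
        exact Set.ncard_union_le Pa Pn
      rcases Pn.eq_empty_or_nonempty with hPne' | ⟨Q0, hQ0⟩
      · have : Ps.ncard ≤ X.ncard + 1 := by
          have : Pn.ncard = 0 := by rw [hPne']; simp
          omega
        exact le_trans this (le_trans (by omega) (le_max_right _ _))
      · have hXQ : X ⊆ Q0 := by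
          intro x hx
          simp only [hX, Set.mem_iUnion] at hx
          obtain ⟨t, ht, hxt⟩ := hx
          obtain ⟨y, hy⟩ := hmeet Q0 hQ0.1 t ht
          have hya : y ≠ a := fun h => hQ0.2 (h ▸ hy.1)
          have hyX : y ∈ g t \ {a} := ⟨hy.2, hya⟩
          have := hXs t ht hyX hxt
          exact this ▸ hy.1
        have hX2 : X.ncard ≤ 2 :=
          le_trans (Set.ncard_le_ncard hXQ (Set.toFinite _)) (hP2 Q0 hQ0.1)
        have hQsub : ∀ P ∈ Pn, P ⊆ Q0 := by
          intro P hP x hx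
          have := hsubX P hP.1 hx
          rcases Set.mem_insert_iff.mp this with rfl | hxX
          · exact absurd hx hP.2
          · exact hXQ hxX
        have hPnB : Pn.ncard ≤ 4 := by
          have := count_le' Pn Q0 (fun P hP => hPne P hP.1) (fun P hP => hP2 P hP.1) hQsub
          have h4 : Q0.ncard * Q0.ncard ≤ 4 := by
            have := hP2 Q0 hQ0.1
            nlinarith
          omega
        have : Ps.ncard ≤ 8 := by omega
        exact le_trans this (le_trans (by norm_num) (le_max_left _ _))
    · -- no common element: everything inside a triangle {a, b, cc}
      push_neg at hcom
      have hgrep : ∀ t ∈ s, ∃ x y, x ≠ y ∧ g t = {x, y} := by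
        intro t ht
        have hne : (g t).Nonempty := by
          obtain ⟨y, hy⟩ := hmeet Q hQmem t ht
          exact ⟨y, hy.2⟩
        obtain ⟨x, y, hxy⟩ := pair_rep' hne (hg2 t ht)
        by_cases hxy' : x = y
        · exfalso
          subst hxy'
          obtain ⟨t', ht', hxt'⟩ := hcom x
          obtain ⟨z, hz⟩ := hint t ht t' ht'
          have : z = x := by
            have := hz.1
            rw [hxy] at this
            simpa using this
          exact hxt' (this ▸ hz.2)
        · exact ⟨x, y, hxy', hxy⟩
      obtain ⟨a, b, hab, h1⟩ := hgrep t0 ht0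
      obtain ⟨t2, ht2, ha2⟩ := hcom a
      have hb2 : b ∈ g t2 := by
        obtain ⟨z, hz⟩ := hint t0 ht0 t2 ht2
        have hz1 := hz.1
        rw [h1] at hz1
        rcases hz1 with rfl | rfl
        · exact absurd hz.2 ha2
        · exact hz.2
      obtain ⟨p, q, hpq, h2'⟩ := hgrep t2 ht2
      have hcc : ∃ cc, cc ≠ b ∧ cc ≠ a ∧ g t2 = {b, cc} := by
        have hb' : b ∈ ({p, q} : Set C) := h2' ▸ hb2
        simp only [Set.mem_insert_iff, Set.mem_singleton_iff] at hb'
        rcases hb' with hbp | hbq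
        · subst hbp
          refine ⟨q, Ne.symm hpq, ?_, h2'⟩
          intro h
          apply ha2
          rw [h2', ← h]
          exact Set.mem_insert_iff.mpr (Or.inr rfl)
        · subst hbq
          refine ⟨p, hpq, ?_, by rw [h2', Set.pair_comm]⟩
          intro h
          apply ha2
          rw [h2', ← h]
          exact Set.mem_insert _ _
      obtain ⟨cc, hcb, hca, h2''⟩ := hcc
      obtain ⟨t3, ht3, hb3⟩ := hcom b
      have ha3 : a ∈ g t3 := by
        obtain ⟨z, hz⟩ := hint t0 ht0 t3 ht3
        have hz1 := hz.1
        rw [h1] at hz1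
        rcases hz1 with rfl | rfl
        · exact hz.2
        · exact absurd hz.2 hb3
      have hc3 : cc ∈ g t3 := by
        obtain ⟨z, hz⟩ := hint t2 ht2 t3 ht3
        have hz1 := hz.1
        rw [h2''] at hz1
        rcases hz1 with rfl | rfl
        · exact absurd hz.2 hb3
        · exact hz.2
      have h3' : g t3 = {a, cc} := by
        refine (Set.eq_of_subset_of_ncard_le ?_ ?_ (Set.toFinite _)).symm
        · rintro z (rfl | rfl)
          · exact ha3
          · exact hc3
        · rw [Set.ncard_pair (Ne.symm hca)]
          exact hg2 t3 ht3
      have htriple : ∀ t ∈ s, g t ⊆ ({a, b, cc} : Set C) := by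
        intro t ht
        have key : ∀ u w : C, g t = {u, w} → u ∉ ({a, b, cc} : Set C) → False := by
          intro u w hrep' hu
          simp only [Set.mem_insert_iff, Set.mem_singleton_iff, not_or] at hu
          have meet3 : ∀ t' ∈ s, ∀ x y : C, g t' = {x, y} →
              x ∈ ({a, b, cc} : Set C) → y ∈ ({a, b, cc} : Set C) → (w = x ∨ w = y) := by
            intro t' ht' x y hxy hx hy
            obtain ⟨z, hz⟩ := hint t ht t' ht'
            have hz1 : z ∈ ({u, w} : Set C) := hrep' ▸ hz.1
            have hz2 : z ∈ ({x, y} : Set C) := hxy ▸ hz.2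
            simp only [Set.mem_insert_iff, Set.mem_singleton_iff] at hz1 hz2 hx hy
            rcases hz1 with rfl | rfl
            · rcases hz2 with rfl | rfl <;> tauto
            · exact hz2
          have hA := meet3 t0 ht0 a b h1 (by simp) (by simp)
          have hB := meet3 t2 ht2 b cc h2'' (by simp) (by simp)
          have hC := meet3 t3 ht3 a cc h3' (by simp) (by simp)
          rcases hA with rfl | rfl
          · rcases hB with h | h
            · exact hab h
            · exact hca h.symm
          · rcases hC with h | h
            · exact hab h.symm
            · exact hcb h.symm
        obtain ⟨x, y, hxy, hrep⟩ := hgrep t ht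
        by_cases hx : x ∈ ({a, b, cc} : Set C)
        · by_cases hy : y ∈ ({a, b, cc} : Set C)
          · rw [hrep]
            rintro z (rfl | rfl)
            · exact hx
            · exact hy
          · exact (key y x (by rw [hrep, Set.pair_comm]) hy).elim
        · exact (key x y hrep hx).elim
      have hPsub : ∀ P ∈ Ps, P ⊆ ({a, b, cc} : Set C) := by
        intro P hP x hx
        obtain ⟨t, ht, hxt⟩ := hsub P hP x hx
        exact htriple t ht hxt
      have hb9 : Ps.ncard ≤ 9 := by
        have := count_le' Ps _ hPne hP2 hPsub
        have h3 : ({a, b, cc} : Set C).ncard ≤ 3 := by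
          refine le_trans (Set.ncard_insert_le _ _) ?_
          have := Set.ncard_insert_le b ({cc} : Set C)
          simp only [Set.ncard_singleton] at this
          omega
        nlinarith
      exact le_trans hb9 (le_trans (by norm_num) (le_max_left _ _))

/-- If `c` is a `2`-valid edge coloring of `G`, `T` a nonempty vertex set and `I` a vertex set
disjoint from `T` all of whose members have neighborhood exactly `T`, then the number of
distinct palettes of vertices of `I` is at most `max 10 (|T| + 1)`. -/
theorem stmt12 {V : Type*} [Fintype V] (G : SimpleGraph V) (k : ℕ)
    (c : G.edgeSet → Fin k) (hsurj : Function.Surjective c) (h2 : TwoValid c)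
    (T I : Set V) (hTne : T.Nonempty) (hdisj : Disjoint I T)
    (hnbr : ∀ v ∈ I, G.neighborSet v = T) :
    ((fun v => palette c v) '' I).ncard ≤ max 10 (T.ncard + 1) := by
  classical
  have hadj : ∀ v ∈ I, ∀ t ∈ T, G.Adj v t := by
    intro v hv t ht
    have h := hnbr v hv
    rw [← h] at ht
    exact ht
  have hmem : ∀ v ∈ I, ∀ t ∈ T,
      ∃ i : Fin k, i ∈ palette c v ∩ palette c t := by
    intro v hv t ht
    have ha : G.Adj v t := hadj v hv t ht
    refine ⟨c ⟨s(v, t), ha⟩, ⟨⟨s(v, t), ha⟩, ?_, rfl⟩, ⟨⟨s(v, t), ha⟩, ?_, rfl⟩⟩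
    · exact Sym2.mem_mk_left v t
    · exact Sym2.mem_mk_right v t
  obtain ⟨t0, ht0⟩ := hTne
  refine abstract_bound T.toFinite (fun t => palette c t) (fun t _ => h2 t) ?_ ?_ ?_ ?_
  · rintro P ⟨v, hv, rfl⟩
    obtain ⟨i, hi⟩ := hmem v hv t0 ht0
    exact ⟨i, hi.1⟩
  · rintro P ⟨v, hv, rfl⟩
    exact h2 v
  · rintro P ⟨v, hv, rfl⟩ t ht
    obtain ⟨i, hi⟩ := hmem v hv t ht
    exact ⟨i, hi⟩
  · rintro P ⟨v, hv, rfl⟩ x hx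
    obtain ⟨e, hve, hce⟩ := hx
    obtain ⟨w, hw⟩ := Sym2.mem_iff_exists.mp hve
    have hadj' : G.Adj v w := by
      have he := e.2
      rw [hw] at he
      exact he
    have hwT : w ∈ T := by
      rw [← hnbr v hv]
      exact hadj'
    refine ⟨w, hwT, e, ?_, hce⟩
    rw [hw]
    exact Sym2.mem_mk_right v w
end

section
/- Let F be a finite family of m finite sets, each of cardinality at most 2, such that F contains no three pairwise disjoint members. Then the union of all sets in F has cardinality at most m + 2. -/
/-- If `F` is a finite family of `m` finite sets, each of cardinality at most `2`, with no
three pairwise disjoint members, then the union of all sets of `F` has at most `m + 2`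
elements. -/
theorem stmt13 {α : Type*} [DecidableEq α] (F : Finset (Finset α))
    (hcard : ∀ A ∈ F, A.card ≤ 2)
    (hno3 : ¬ ∃ A ∈ F, ∃ B ∈ F, ∃ C ∈ F, A ≠ B ∧ A ≠ C ∧ B ≠ C ∧
      Disjoint A B ∧ Disjoint A C ∧ Disjoint B C) :
    (F.sup id).card ≤ F.card + 2 := by
  classical
  revert hcard hno3
  induction F using Finset.strongInduction with
  | _ F ih =>
    intro hcard hno3
    by_cases h : ∃ A ∈ F, (A \ ((F.erase A).sup id)).card ≤ 1
    · obtain ⟨A, hA, hA1⟩ := h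
      have hsub : (F.erase A) ⊂ F := Finset.erase_ssubset hA
      have hIH : ((F.erase A).sup id).card ≤ (F.erase A).card + 2 := by
        apply ih _ hsub
        · intro B hB; exact hcard B (Finset.mem_of_mem_erase hB)
        · intro ⟨A', hA', B, hB, C, hC, rest⟩
          exact hno3 ⟨A', Finset.mem_of_mem_erase hA', B, Finset.mem_of_mem_erase hB,
            C, Finset.mem_of_mem_erase hC, rest⟩
      have hF : F = insert A (F.erase A) := (Finset.insert_erase hA).symm
      have hsup : F.sup id = A ∪ (F.erase A).sup id := by
        conv_lhs => rw [hF]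
        rw [Finset.sup_insert]; rfl
      have hcardu : (A \ ((F.erase A).sup id)).card + ((F.erase A).sup id).card
          = (A ∪ (F.erase A).sup id).card := Finset.card_sdiff_add_card A _
      have hFc : (F.erase A).card + 1 = F.card := Finset.card_erase_add_one hA
      rw [hsup]
      omega
    · push_neg at h
      -- every member is a 2-set disjoint from all other members
      have hdisj : ∀ A ∈ F, ∀ B ∈ F, A ≠ B → Disjoint A B := by
        intro A hA B hB hne
        have h2 : 2 ≤ (A \ ((F.erase A).sup id)).card := h A hA
        have hAle : (A \ ((F.erase A).sup id)).card ≤ A.card :=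
          Finset.card_le_card (Finset.sdiff_subset)
        have hAeq : A \ ((F.erase A).sup id) = A :=
          Finset.eq_of_subset_of_card_le Finset.sdiff_subset (by
            have := hcard A hA; omega)
        have hAdisj : Disjoint A ((F.erase A).sup id) := by
          rw [Finset.disjoint_iff_inter_eq_empty]
          have := Finset.sdiff_eq_self_iff_disjoint.mp hAeq
          exact Finset.disjoint_iff_inter_eq_empty.mp this
        have hBsub : B ≤ (F.erase A).sup id :=
          Finset.le_sup (f := id) (Finset.mem_erase.mpr ⟨fun hEq => hne hEq.symm, hB⟩)
        exact hAdisj.mono_right hBsub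
      have hcard2 : F.card ≤ 2 := by
        by_contra hc
        push_neg at hc
        obtain ⟨A, hA⟩ : F.Nonempty := Finset.card_pos.mp (by omega)
        have h2 : 1 < (F.erase A).card := by
          rw [Finset.card_erase_of_mem hA]; omega
        obtain ⟨B, hB, C, hC, hBC⟩ := Finset.one_lt_card.mp h2
        have hBF := Finset.mem_of_mem_erase hB
        have hCF := Finset.mem_of_mem_erase hC
        have hAB : A ≠ B := fun e => (Finset.mem_erase.mp hB).1 e.symm
        have hAC : A ≠ C := fun e => (Finset.mem_erase.mp hC).1 e.symm
        exact hno3 ⟨A, hA, B, hBF, C, hCF, hAB, hAC, hBC,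
          hdisj A hA B hBF hAB, hdisj A hA C hCF hAC, hdisj B hBF C hCF hBC⟩
      have hsum : (F.sup id).card ≤ 2 * F.card := by
        calc (F.sup id).card = (F.biUnion id).card := by rw [Finset.sup_eq_biUnion]
          _ ≤ ∑ A ∈ F, A.card := Finset.card_biUnion_le
          _ ≤ ∑ A ∈ F, 2 := Finset.sum_le_sum hcard
          _ = 2 * F.card := by rw [Finset.sum_const, smul_eq_mul, mul_comm]
      omega
end

section
/- Let G be a finite simple graph, k ≥ 1, S a vertex cover of G, and T ⊆ S. Let I_T = {v ∈ V(G)∖S : N_G(v) = T} and r = max{10, |T|+1}. Suppose |I_T| > r, and let H be the induced subgraph of G obtained by deleting all but r of the vertices of I_T. Then G has a 2-valid edge coloring with exactly k colors if and only if H has a 2-valid edge coloring with exactly k colors. -/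
section Aux

variable {V : Type*} [Fintype V] [DecidableEq V] (G : SimpleGraph V) (k : ℕ)

private lemma backward_dir (hk : 1 ≤ k)
    (S : Set V) (T : Set V) (hT : T ⊆ S)
    (I : Set V) (hI : I = {v : V | v ∉ S ∧ G.neighborSet v = T})
    (W : Set V) (hW : W ⊆ I) (hWne : W.Nonempty)
    (K : Set V) (hK : K = (I \ W)ᶜ) :
    (∃ c : (G.induce K).edgeSet → Fin k, Function.Surjective c ∧ TwoValid c) →
    (∃ c : G.edgeSet → Fin k, Function.Surjective c ∧ TwoValid c) := by
  classical
  rintro ⟨c', hc'surj, hc'val⟩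
  obtain ⟨w0, hw0⟩ := hWne
  -- basic facts
  have hIadj : ∀ v ∈ I, ∀ u : V, G.Adj v u ↔ u ∈ T := by
    intro v hv u
    rw [hI] at hv
    rw [← hv.2]
    rfl
  have hInotS : ∀ v ∈ I, v ∉ S := by
    intro v hv; rw [hI] at hv; exact hv.1
  have hTK : ∀ t ∈ T, t ∈ K := by
    intro t ht
    rw [hK]
    intro h
    exact hInotS t h.1 (hT ht)
  have hWK : ∀ w ∈ W, w ∈ K := by
    intro w hw
    rw [hK]
    intro h
    exact h.2 hw
  have hHadj : ∀ a b : K, (G.induce K).Adj a b ↔ G.Adj a.val b.val := by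
    intro a b
    simp
  have hw0K : w0 ∈ K := hWK w0 hw0
  -- every H-edge maps to a G-edge
  have hmap : ∀ e' : (G.induce K).edgeSet, (e'.val.map Subtype.val) ∈ G.edgeSet := by
    rintro ⟨e, he⟩
    revert he
    refine Sym2.ind (fun a b he => ?_) e
    rw [Sym2.map_pair_eq]
    exact (hHadj a b).1 ((SimpleGraph.mem_edgeSet _).1 he)
  have hlift : ∀ a b : V, G.Adj a b → ∀ (ha : a ∈ K) (hb : b ∈ K),
      ∃ e' : (G.induce K).edgeSet, e'.val.map Subtype.val = s(a, b) := by
    intro a b hab ha hb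
    exact ⟨⟨s(⟨a, ha⟩, ⟨b, hb⟩), (SimpleGraph.mem_edgeSet _).2 ((hHadj _ _).2 hab)⟩,
      Sym2.map_pair_eq _ _ _⟩
  -- edges not liftable have the special shape
  have hnotP : ∀ (e : G.edgeSet),
      ¬ (∃ e' : (G.induce K).edgeSet, e'.val.map Subtype.val = e.val) →
      ∃ a b, e.val = s(a, b) ∧ a ∈ I \ W ∧ b ∈ T := by
    rintro ⟨e, he⟩ hne
    simp only at hne ⊢
    revert he hne
    induction e using Sym2.ind with
    | _ a b =>
      intro he hne
      have hadj : G.Adj a b := (SimpleGraph.mem_edgeSet _).1 he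
      by_cases ha : a ∈ I \ W
      · exact ⟨a, b, rfl, ha, (hIadj a ha.1 b).1 hadj⟩
      by_cases hb : b ∈ I \ W
      · exact ⟨b, a, Sym2.eq_swap, hb, (hIadj b hb.1 a).1 hadj.symm⟩
      · refine absurd (hlift a b hadj ?_ ?_) hne <;> rw [hK] <;> assumption
  -- selection of replacement edges
  have hsel : ∀ (e : G.edgeSet),
      ¬ (∃ e' : (G.induce K).edgeSet, e'.val.map Subtype.val = e.val) →
      ∃ q : (G.induce K).edgeSet, ∃ t, t ∈ T ∧ t ∈ e.val ∧
        q.val.map Subtype.val = s(w0, t) := by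
    intro e hne
    obtain ⟨a, b, heq, ha, hb⟩ := hnotP e hne
    obtain ⟨q, hq⟩ := hlift w0 b ((hIadj w0 (hW hw0) b).2 hb) hw0K (hTK b hb)
    exact ⟨q, b, hb, by rw [heq]; exact Sym2.mem_mk_right a b, hq⟩
  refine ⟨fun e => if h : ∃ e' : (G.induce K).edgeSet, e'.val.map Subtype.val = e.val
    then c' h.choose else c' (hsel e h).choose, ?_, ?_⟩
  · -- surjectivity
    intro i
    obtain ⟨e', hce'⟩ := hc'surj i
    refine ⟨⟨e'.val.map Subtype.val, hmap e'⟩, ?_⟩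
    have hP : ∃ q : (G.induce K).edgeSet,
        q.val.map Subtype.val = (⟨e'.val.map Subtype.val, hmap e'⟩ : G.edgeSet).val := ⟨e', rfl⟩
    simp only [dif_pos hP]
    have : hP.choose = e' := by
      apply Subtype.ext
      apply Sym2.map.injective Subtype.val_injective
      exact hP.choose_spec
    rw [this, hce']
  · -- 2-valid
    intro x
    by_cases hx : x ∈ K
    · have hsub : palette (G := G) (fun e => if h : ∃ e' : (G.induce K).edgeSet,
          e'.val.map Subtype.val = e.val then c' h.choose else c' (hsel e h).choose) x
          ⊆ palette c' ⟨x, hx⟩ := by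
        rintro i ⟨e, hxe, hce⟩
        by_cases h : ∃ e' : (G.induce K).edgeSet, e'.val.map Subtype.val = e.val
        · simp only [dif_pos h] at hce
          refine ⟨h.choose, ?_, hce⟩
          have hcs := h.choose_spec
          rw [← hcs] at hxe
          obtain ⟨y, hy, hyx⟩ := Sym2.mem_map.1 hxe
          have : y = ⟨x, hx⟩ := Subtype.ext hyx
          rwa [← this]
        · simp only [dif_neg h] at hce
          obtain ⟨t, htT, hte, hq⟩ := (hsel e h).choose_spec
          obtain ⟨a, b, heq, ha, hb⟩ := hnotP e h
          have hxK : a ∉ K := by rw [hK]; simpa using ha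
          have hxb : x = b := by
            rw [heq, Sym2.mem_iff] at hxe
            rcases hxe with rfl | rfl
            · exact absurd hx hxK
            · rfl
          have htb : t = b := by
            rw [heq, Sym2.mem_iff] at hte
            rcases hte with rfl | rfl
            · exact absurd (hT htT) (hInotS t ha.1)
            · rfl
          refine ⟨(hsel e h).choose, ?_, hce⟩
          have hxq : x ∈ (hsel e h).choose.val.map Subtype.val := by
            rw [hq, hxb, ← htb]
            exact Sym2.mem_mk_right w0 t
          obtain ⟨y, hy, hyx⟩ := Sym2.mem_map.1 hxq
          have : y = ⟨x, hx⟩ := Subtype.ext hyx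
          rwa [← this]
      calc _ ≤ (palette c' ⟨x, hx⟩).ncard := Set.ncard_le_ncard hsub (Set.toFinite _)
        _ ≤ 2 := hc'val _
    · have hsub : palette (G := G) (fun e => if h : ∃ e' : (G.induce K).edgeSet,
          e'.val.map Subtype.val = e.val then c' h.choose else c' (hsel e h).choose) x
          ⊆ palette c' ⟨w0, hw0K⟩ := by
        rintro i ⟨e, hxe, hce⟩
        have h : ¬ ∃ e' : (G.induce K).edgeSet, e'.val.map Subtype.val = e.val := by
          rintro ⟨e', he'⟩
          rw [← he'] at hxe
          obtain ⟨y, hy, hyx⟩ := Sym2.mem_map.1 hxe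
          exact hx (hyx ▸ y.2)
        simp only [dif_neg h] at hce
        obtain ⟨t, htT, hte, hq⟩ := (hsel e h).choose_spec
        refine ⟨(hsel e h).choose, ?_, hce⟩
        have hxq : w0 ∈ (hsel e h).choose.val.map Subtype.val := by
          rw [hq]; exact Sym2.mem_mk_left w0 t
        obtain ⟨y, hy, hyx⟩ := Sym2.mem_map.1 hxq
        have : y = ⟨w0, hw0K⟩ := Subtype.ext hyx
        rwa [← this]
      calc _ ≤ (palette c' ⟨w0, hw0K⟩).ncard := Set.ncard_le_ncard hsub (Set.toFinite _)
        _ ≤ 2 := hc'val _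


private lemma forward_dir (hk : 1 ≤ k)
    (S : Set V) (T : Set V) (hT : T ⊆ S)
    (I : Set V) (hI : I = {v : V | v ∉ S ∧ G.neighborSet v = T})
    (r : ℕ) (hr : r = max 10 (T.ncard + 1)) (hbig : r < I.ncard)
    (W : Set V) (hW : W ⊆ I) (hWr : W.ncard = r)
    (K : Set V) (hK : K = (I \ W)ᶜ) :
    (∃ c : G.edgeSet → Fin k, Function.Surjective c ∧ TwoValid c) →
    (∃ c : (G.induce K).edgeSet → Fin k, Function.Surjective c ∧ TwoValid c) := by
  classical
  rintro ⟨c, hcsurj, hcval⟩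
  -- basic facts
  have hIadj : ∀ v ∈ I, ∀ u : V, G.Adj v u ↔ u ∈ T := by
    intro v hv u
    rw [hI] at hv
    rw [← hv.2]
    rfl
  have hInotS : ∀ v ∈ I, v ∉ S := by
    intro v hv; rw [hI] at hv; exact hv.1
  have hInotT : ∀ v ∈ I, v ∉ T := fun v hv h => hInotS v hv (hT h)
  have hTK : ∀ t ∈ T, t ∈ K := by
    intro t ht
    rw [hK]
    intro h
    exact hInotS t h.1 (hT ht)
  have hWK : ∀ w ∈ W, w ∈ K := by
    intro w hw
    rw [hK]
    intro h
    exact h.2 hw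
  have hIK : ∀ x : V, x ∉ I → x ∈ K := by
    intro x hx
    rw [hK]
    intro h
    exact hx h.1
  have hHadj : ∀ a b : K, (G.induce K).Adj a b ↔ G.Adj a.val b.val := by
    intro a b
    simp
  -- nonemptiness
  have hIne : I.Nonempty := Set.nonempty_of_ncard_ne_zero (by omega)
  obtain ⟨v0, hv0⟩ := hIne
  have hWne : W.Nonempty := Set.nonempty_of_ncard_ne_zero (by omega)
  obtain ⟨w0, hw0⟩ := hWne
  -- the symmetric auxiliary coloring
  obtain ⟨cc, hccadj, hccsymm⟩ : ∃ cc : V → V → Fin k,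
      (∀ a b (h : G.Adj a b), cc a b = c ⟨s(a, b), h⟩) ∧ (∀ a b, cc a b = cc b a) := by
    refine ⟨fun a b => if h : G.Adj a b then c ⟨s(a, b), h⟩ else ⟨0, hk⟩,
      fun a b h => dif_pos h, fun a b => ?_⟩
    by_cases h : G.Adj a b
    · simp only [dif_pos h, dif_pos h.symm]
      exact congrArg c (Subtype.ext Sym2.eq_swap)
    · simp only [dif_neg h, dif_neg (fun h' : G.Adj b a => h h'.symm)]
  have hccpal : ∀ a b : V, G.Adj a b → cc a b ∈ palette c a :=
    fun a b h => ⟨⟨s(a, b), h⟩, Sym2.mem_mk_left a b, (hccadj a b h).symm⟩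
  have hccpal2 : ∀ a b : V, G.Adj a b → cc a b ∈ palette c b :=
    fun a b h => ⟨⟨s(a, b), h⟩, Sym2.mem_mk_right a b, (hccadj a b h).symm⟩
  -- colors from I at a vertex t
  have hA2 : ∀ t ∈ T, ((fun v => cc v t) '' I).ncard ≤ 2 := by
    intro t ht
    have hsub : (fun v => cc v t) '' I ⊆ palette c t := by
      rintro _ ⟨v, hv, rfl⟩
      exact hccpal2 v t ((hIadj v hv t).2 ht)
    exact le_trans (Set.ncard_le_ncard hsub (Set.toFinite _)) (hcval t)
  -- in a set of size ≤ 2 containing x, any two elements different from x agree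
  have htriple : ∀ (A : Set (Fin k)) (x y z : Fin k), A.ncard ≤ 2 →
      x ∈ A → y ∈ A → z ∈ A → y ≠ x → z ≠ x → y = z := by
    intro A x y z hA hx hy hz hyx hzx
    by_contra hne
    have hsub : ({x, y, z} : Set (Fin k)) ⊆ A := by
      intro u hu
      rcases hu with rfl | rfl | rfl <;> assumption
    have h3 : ({x, y, z} : Set (Fin k)).ncard = 3 := by
      rw [Set.ncard_insert_of_notMem (by simp [Ne.symm hyx, Ne.symm hzx]),
        Set.ncard_insert_of_notMem (by simp [hne]), Set.ncard_singleton]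
    have := Set.ncard_le_ncard hsub (Set.toFinite _)
    omega
  -- second witness function
  obtain ⟨vt, hvtI, hvt⟩ : ∃ vt : V → V, (∀ t, vt t ∈ I) ∧
      ∀ t ∈ T, ∀ v ∈ I, cc v t ≠ cc v0 t → cc (vt t) t = cc v t := by
    refine ⟨fun t => if h : ∃ v, v ∈ I ∧ cc v t ≠ cc v0 t then h.choose else v0, ?_, ?_⟩
    · intro t
      by_cases h : ∃ v, v ∈ I ∧ cc v t ≠ cc v0 t
      · simp only [dif_pos h]; exact h.choose_spec.1
      · simp only [dif_neg h]; exact hv0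
    · intro t ht v hv hne
      have h : ∃ v, v ∈ I ∧ cc v t ≠ cc v0 t := ⟨v, hv, hne⟩
      simp only [dif_pos h]
      exact htriple ((fun v => cc v t) '' I) (cc v0 t) (cc h.choose t) (cc v t) (hA2 t ht)
        ⟨v0, hv0, rfl⟩ ⟨h.choose, h.choose_spec.1, rfl⟩ ⟨v, hv, rfl⟩ h.choose_spec.2 hne
  -- injection from T into W \ {w0}
  have hrT : T.ncard + 1 ≤ r := by rw [hr]; exact le_max_right _ _
  have hWd : (W \ {w0}).ncard = r - 1 := by
    rw [Set.ncard_diff_singleton_of_mem hw0, hWr]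
  have hle : T.encard ≤ (W \ {w0}).encard := by
    rw [← (Set.toFinite T).cast_ncard_eq, ← (Set.toFinite (W \ {w0})).cast_ncard_eq]
    exact_mod_cast by omega
  have : Nonempty V := ⟨v0⟩
  obtain ⟨g, hgmem, hginj⟩ := Set.Finite.exists_injOn_of_encard_le (Set.toFinite T) hle
  -- the replacement pattern function
  obtain ⟨f, hfI, hfg, hfw0⟩ : ∃ f : V → V, (∀ w, f w ∈ I) ∧
      (∀ t ∈ T, f (g t) = vt t) ∧ f w0 = v0 := by
    refine ⟨fun w => if h : ∃ t, t ∈ T ∧ g t = w then vt h.choose else v0, ?_, ?_, ?_⟩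
    · intro w
      by_cases h : ∃ t, t ∈ T ∧ g t = w
      · simp only [dif_pos h]; exact hvtI _
      · simp only [dif_neg h]; exact hv0
    · intro t ht
      have h : ∃ t', t' ∈ T ∧ g t' = g t := ⟨t, ht, rfl⟩
      simp only [dif_pos h]
      have : h.choose = t := hginj h.choose_spec.1 ht h.choose_spec.2
      rw [this]
    · have h : ¬ ∃ t, t ∈ T ∧ g t = w0 := by
        rintro ⟨t, ht, hgt⟩
        exact (hgmem ht).2 (by simpa using hgt)
      simp only [dif_neg h]
  have hcover : ∀ t ∈ T, ∀ v ∈ I, ∃ w ∈ W, cc (f w) t = cc v t := by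
    intro t ht v hv
    by_cases hc : cc v t = cc v0 t
    · exact ⟨w0, hw0, by rw [hfw0, hc]⟩
    · exact ⟨g t, (hgmem ht).1, by rw [hfg t ht]; exact hvt t ht v hv hc⟩
  -- the new symmetric coloring function on pairs
  have hWTdisj : ∀ a : V, a ∈ W → a ∈ T → False := fun a hw ht => hInotT a (hW hw) ht
  obtain ⟨F, hFsymm, hFW, hFnot⟩ : ∃ F : V → V → Fin k,
      (∀ a b, F a b = F b a) ∧
      (∀ a b, a ∈ W → b ∈ T → F a b = cc (f a) b) ∧
      (∀ a b, a ∉ W → b ∉ W → F a b = cc a b) := by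
    refine ⟨fun a b => if a ∈ W ∧ b ∈ T then cc (f a) b
      else if b ∈ W ∧ a ∈ T then cc (f b) a else cc a b, ?_, ?_, ?_⟩
    · intro a b
      by_cases h1 : a ∈ W ∧ b ∈ T <;> by_cases h2 : b ∈ W ∧ a ∈ T
      · exact absurd h1.1 (fun h => hWTdisj a h h2.2)
      · simp only [if_pos h1, if_neg h2, if_pos h1]
      · simp only [if_neg h1, if_pos h2, if_pos h2, if_neg h1]
      · simp only [if_neg h1, if_neg h2]
        exact hccsymm a b
    · intro a b ha hb
      simp only [if_pos (⟨ha, hb⟩ : a ∈ W ∧ b ∈ T)]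
    · intro a b ha hb
      simp only [if_neg (fun h : a ∈ W ∧ b ∈ T => ha h.1),
        if_neg (fun h : b ∈ W ∧ a ∈ T => hb h.1)]
  -- the new coloring
  refine ⟨fun e => Sym2.lift ⟨F, hFsymm⟩ (e.val.map Subtype.val), ?_, ?_⟩
  · -- surjectivity
    intro i
    have hmk : ∀ a b : V, G.Adj a b → ∀ (ha : a ∈ K) (hb : b ∈ K), F a b = i →
        ∃ e' : (G.induce K).edgeSet, Sym2.lift ⟨F, hFsymm⟩ (e'.val.map Subtype.val) = i := by
      intro a b hab ha hb hF
      refine ⟨⟨s(⟨a, ha⟩, ⟨b, hb⟩), (SimpleGraph.mem_edgeSet _).2 ((hHadj _ _).2 hab)⟩, ?_⟩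
      rw [Sym2.map_pair_eq, Sym2.lift_mk]
      exact hF
    have key : ∀ (e : G.edgeSet), c e = i →
        ∃ e' : (G.induce K).edgeSet, Sym2.lift ⟨F, hFsymm⟩ (e'.val.map Subtype.val) = i := by
      rintro ⟨e, he⟩ hce
      revert he
      induction e using Sym2.ind with
      | _ a b =>
        intro he hce
        have hadj : G.Adj a b := (SimpleGraph.mem_edgeSet _).1 he
        have hcc : cc a b = i := by rw [hccadj a b hadj]; exact hce
        by_cases haI : a ∈ I
        · have hbT : b ∈ T := (hIadj a haI b).1 hadj
          obtain ⟨w, hwW, hcw⟩ := hcover b hbT a haI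
          refine hmk w b ((hIadj w (hW hwW) b).2 hbT) (hWK w hwW) (hTK b hbT) ?_
          rw [hFW w b hwW hbT, hcw, hcc]
        by_cases hbI : b ∈ I
        · have haT : a ∈ T := (hIadj b hbI a).1 hadj.symm
          obtain ⟨w, hwW, hcw⟩ := hcover a haT b hbI
          refine hmk w a ((hIadj w (hW hwW) a).2 haT) (hWK w hwW) (hTK a haT) ?_
          rw [hFW w a hwW haT, hcw, hccsymm b a, hcc]
        · refine hmk a b hadj (hIK a haI) (hIK b hbI) ?_
          rw [hFnot a b (fun h => haI (hW h)) (fun h => hbI (hW h)), hcc]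
    obtain ⟨e, hce⟩ := hcsurj i
    obtain ⟨e', he'⟩ := key e hce
    exact ⟨e', he'⟩
  · -- 2-valid
    intro x
    have claim1 : ∀ a b : V, G.Adj a b →
        F a b ∈ palette c (if a ∈ W then f a else a) := by
      intro a b hab
      by_cases haW : a ∈ W
      · have hbT : b ∈ T := (hIadj a (hW haW) b).1 hab
        rw [if_pos haW, hFW a b haW hbT]
        exact hccpal (f a) b ((hIadj (f a) (hfI a) b).2 hbT)
      · rw [if_neg haW]
        by_cases hbW : b ∈ W
        · have haT : a ∈ T := (hIadj b (hW hbW) a).1 hab.symm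
          rw [hFsymm a b, hFW b a hbW haT]
          exact hccpal2 (f b) a ((hIadj (f b) (hfI b) a).2 haT)
        · rw [hFnot a b haW hbW]
          exact hccpal a b hab
    have hsub : palette (G := G.induce K)
        (fun e => Sym2.lift ⟨F, hFsymm⟩ (e.val.map Subtype.val)) x
        ⊆ palette c (if x.val ∈ W then f x.val else x.val) := by
      rintro i ⟨⟨e, he⟩, hxe, hce⟩
      simp only at hxe hce
      revert he hxe hce
      induction e using Sym2.ind with
      | _ u v =>
        intro he hxe hce
        have hadj : G.Adj u.val v.val := (hHadj u v).1 ((SimpleGraph.mem_edgeSet _).1 he)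
        rw [Sym2.map_pair_eq, Sym2.lift_mk] at hce
        replace hce : F u.val v.val = i := hce
        rw [Sym2.mem_iff] at hxe
        rcases hxe with rfl | rfl
        · exact hce ▸ claim1 x.val v.val hadj
        · rw [hFsymm] at hce
          exact hce ▸ claim1 x.val u.val hadj.symm
    calc _ ≤ (palette c (if x.val ∈ W then f x.val else x.val)).ncard :=
          Set.ncard_le_ncard hsub (Set.toFinite _)
      _ ≤ 2 := hcval _


end Aux

/-- Correctness of the reduction rule (R1): with `S` a vertex cover, `T ⊆ S`,
`I` the set of vertices outside `S` whose neighborhood is exactly `T`,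
`r = max 10 (|T| + 1)` and `|I| > r`, deleting all but `r` vertices of `I`
(keeping a subset `W ⊆ I` with `|W| = r`) yields a graph with a `2`-valid edge coloring
with exactly `k` colors iff `G` has one. -/
theorem stmt14 {V : Type*} [Fintype V] [DecidableEq V] (G : SimpleGraph V) (k : ℕ)
    (hk : 1 ≤ k)
    (S : Set V) (hS : ∀ ⦃a b : V⦄, G.Adj a b → a ∈ S ∨ b ∈ S)
    (T : Set V) (hT : T ⊆ S)
    (I : Set V) (hI : I = {v : V | v ∉ S ∧ G.neighborSet v = T})
    (r : ℕ) (hr : r = max 10 (T.ncard + 1))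
    (hbig : r < I.ncard)
    (W : Set V) (hW : W ⊆ I) (hWr : W.ncard = r) :
    (∃ c : G.edgeSet → Fin k, Function.Surjective c ∧ TwoValid c) ↔
    (∃ c : (G.induce ((I \ W)ᶜ)).edgeSet → Fin k, Function.Surjective c ∧ TwoValid c) := by
  have hr10 : 10 ≤ r := by rw [hr]; exact le_max_left _ _
  have hWne : W.Nonempty := Set.nonempty_of_ncard_ne_zero (by omega)
  constructor
  · exact forward_dir G k hk S T hT I hI r hr hbig W hW hWr ((I \ W)ᶜ) rfl
  · exact backward_dir G k hk S T hT I hI W hW hWne ((I \ W)ᶜ) rfl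
end
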